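/- arXiv:1902.04650 — 8 statements merged into one kernel-verified Lean document; each statement's English description precedes it below -/
import Mathlib

section
/- In the adversarial contamination setup, for every triple of positive integers (k,s,n) with 1 ≤ s ≤ k and every ε ∈ [0,1], the sample mean satisfies E[d_TV(X̄_n, θ*)] ≤ (s/n)^{1/2} + 2ε. -/
open MeasureTheory ProbabilityTheory

noncomputable section

/-- The probability simplex `Δ^{k-1}` in `ℝ^k`. -/
def simplex (k : ℕ) : Set (Fin k → ℝ) :=
  {v | (∀ j, 0 ≤ v j) ∧ ∑ j, v j = 1}

/-- `v` has at most `s` nonzero coordinates. -/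
def sparse {k : ℕ} (s : ℕ) (v : Fin k → ℝ) : Prop :=
  (Finset.univ.filter fun j => v j ≠ 0).card ≤ s

/-- Total variation distance between two points of the simplex. -/
def dTV {k : ℕ} (u v : Fin k → ℝ) : ℝ := (1 / 2) * ∑ j, |u j - v j|

set_option linter.unusedVariables false

lemma simplex_coord {k : ℕ} {v : Fin k → ℝ} (h : v ∈ simplex k) (j : Fin k) :
    0 ≤ v j ∧ v j ≤ 1 := by
  refine ⟨h.1 j, ?_⟩
  rw [← h.2]
  exact Finset.single_le_sum (fun i _ => h.1 i) (Finset.mem_univ j)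

lemma mean_in_simplex {k n : ℕ} (hn : 1 ≤ n) (v : Fin n → Fin k → ℝ)
    (h : ∀ i, v i ∈ simplex k) : (fun j => (1 / n : ℝ) * ∑ i, v i j) ∈ simplex k := by
  have hn' : (0:ℝ) < n := by exact_mod_cast hn
  constructor
  · intro j
    exact mul_nonneg (by positivity) (Finset.sum_nonneg fun i _ => (h i).1 j)
  · rw [← Finset.mul_sum, Finset.sum_comm]
    have : ∑ i : Fin n, ∑ j, v i j = (n : ℝ) := by
      rw [Finset.sum_congr rfl (fun i _ => (h i).2)]; simp
    rw [this]; field_simp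

lemma dTV_nonneg {k : ℕ} (u v : Fin k → ℝ) : 0 ≤ dTV u v := by
  unfold dTV
  exact mul_nonneg (by norm_num) (Finset.sum_nonneg fun j _ => abs_nonneg _)

lemma dTV_le_one {k : ℕ} {u v : Fin k → ℝ} (hu : u ∈ simplex k) (hv : v ∈ simplex k) :
    dTV u v ≤ 1 := by
  unfold dTV
  have h1 : ∑ j, |u j - v j| ≤ ∑ j, (u j + v j) :=
    Finset.sum_le_sum fun j _ => abs_le.mpr
      ⟨by linarith [hu.1 j, hv.1 j], by linarith [hu.1 j, hv.1 j]⟩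
  rw [Finset.sum_add_distrib, hu.2, hv.2] at h1
  linarith

lemma dTV_triangle {k : ℕ} (u v w : Fin k → ℝ) : dTV u w ≤ dTV u v + dTV v w := by
  unfold dTV
  rw [← mul_add, ← Finset.sum_add_distrib]
  gcongr with j _
  exact abs_sub_le _ _ _

variable {Ω : Type} [MeasurableSpace Ω] {μ : Measure Ω}

lemma aux_integrable [IsFiniteMeasure μ] {f : Ω → ℝ} (hf : Measurable f) (C : ℝ)
    (h : ∀ ω, |f ω| ≤ C) : Integrable f μ :=
  (integrable_const C).mono' hf.aestronglyMeasurable (.of_forall h)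

lemma aux_memLp [IsFiniteMeasure μ] {f : Ω → ℝ} (hf : Measurable f) (C : ℝ)
    (h : ∀ ω, |f ω| ≤ C) : MemLp f 2 μ :=
  MemLp.of_bound hf.aestronglyMeasurable C (.of_forall h)

lemma aux_abs_le_sqrt [IsProbabilityMeasure μ] {W : Ω → ℝ} (hW : Measurable W) (C : ℝ)
    (h : ∀ ω, |W ω| ≤ C) :
    ∫ ω, |W ω| ∂μ ≤ Real.sqrt (∫ ω, (W ω) ^ 2 ∂μ) := by
  have habs : MemLp (fun ω => |W ω|) 2 μ := aux_memLp hW.abs C (by simpa using h)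
  have hv := variance_nonneg (fun ω => |W ω|) μ
  rw [variance_eq_sub habs] at hv
  have h2 : (∫ ω, |W ω| ∂μ) ^ 2 ≤ ∫ ω, (W ω) ^ 2 ∂μ := by
    have he : (μ[(fun ω => |W ω|) ^ 2]) = ∫ ω, (W ω) ^ 2 ∂μ := by
      simp [sq_abs]
    rw [he] at hv; linarith
  exact Real.le_sqrt_of_sq_le h2

lemma aux_coord [IsProbabilityMeasure μ] {n k : ℕ} (hn : 1 ≤ n)
    (Y : Fin n → Ω → Fin k → ℝ) (hYmeas : ∀ i, Measurable (Y i))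
    (hYindep : iIndepFun Y μ)
    (hYval : ∀ i ω, Y i ω ∈ simplex k) (j : Fin k) (t : ℝ) (ht0 : 0 ≤ t) (ht1 : t ≤ 1)
    (hmean : ∀ i, ∫ ω, Y i ω j ∂μ = t) :
    ∫ ω, |(1 / n : ℝ) * ∑ i, Y i ω j - t| ∂μ ≤ Real.sqrt (t / n) := by
  have hn' : (0:ℝ) < n := by exact_mod_cast hn
  set Z : Fin n → Ω → ℝ := fun i ω => Y i ω j - t with hZ
  have hYjmeas : ∀ i, Measurable (fun ω => Y i ω j) :=
    fun i => (measurable_pi_apply j).comp (hYmeas i)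
  have hYb : ∀ i ω, 0 ≤ Y i ω j ∧ Y i ω j ≤ 1 := fun i ω => simplex_coord (hYval i ω) j
  have hZmeas : ∀ i, Measurable (Z i) := fun i => (hYjmeas i).sub measurable_const
  have hZbd : ∀ i ω, |Z i ω| ≤ 1 := by
    intro i ω
    have := hYb i ω
    rw [abs_le]; constructor <;> simp only [hZ] <;> nlinarith [ht0, ht1]
  have hZLp : ∀ i, MemLp (Z i) 2 μ := fun i => aux_memLp (hZmeas i) 1 (hZbd i)
  have hYint : ∀ i, Integrable (fun ω => Y i ω j) μ := fun i =>
    aux_integrable (hYjmeas i) 1 (fun ω => abs_le.mpr ⟨by linarith [(hYb i ω).1], (hYb i ω).2⟩)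
  have hZmean : ∀ i, ∫ ω, Z i ω ∂μ = 0 := by
    intro i
    simp only [hZ]
    rw [integral_sub (hYint i) (integrable_const t), hmean i, integral_const]
    simp
  have hindep : iIndepFun Z μ :=
    hYindep.comp (fun _ v => v j - t)
      (fun _ => (measurable_pi_apply j).sub measurable_const)
  have hvar_sum : variance (∑ i, Z i) μ = ∑ i, variance (Z i) μ :=
    IndepFun.variance_sum (fun i _ => hZLp i)
      (fun a _ b _ hab => hindep.indepFun hab)
  have hY2int : ∀ i, Integrable (fun ω => (Y i ω j) ^ 2) μ := fun i =>
    aux_integrable ((hYjmeas i).pow measurable_const) 1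
      (fun ω => by rw [abs_of_nonneg (by positivity)]; nlinarith [(hYb i ω).1, (hYb i ω).2])
  have hvar_i : ∀ i, variance (Z i) μ ≤ t := by
    intro i
    rw [variance_eq_sub (hZLp i)]
    have hz2 : (μ[(Z i) ^ 2]) = ∫ ω, ((Y i ω j) ^ 2 - 2 * t * Y i ω j + t ^ 2) ∂μ := by
      apply integral_congr_ae; filter_upwards with ω
      simp only [hZ, Pi.pow_apply]; ring
    have hzm : (μ[Z i]) = 0 := hZmean i
    rw [hz2, hzm]
    have e1 : ∫ ω, ((Y i ω j) ^ 2 - 2 * t * Y i ω j + t ^ 2) ∂μ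
        = ((∫ ω, (Y i ω j) ^ 2 ∂μ) - ∫ ω, 2 * t * Y i ω j ∂μ) + t ^ 2 := by
      have hfint : Integrable (fun ω => (Y i ω j) ^ 2 - 2 * t * Y i ω j) μ :=
        (hY2int i).sub ((hYint i).const_mul (2 * t))
      rw [integral_add hfint (integrable_const _),
        integral_sub (hY2int i) ((hYint i).const_mul (2 * t)), integral_const]
      simp
    have e2 : ∫ ω, 2 * t * Y i ω j ∂μ = 2 * t * t := by
      rw [integral_const_mul, hmean i]
    have hY2le : ∫ ω, (Y i ω j) ^ 2 ∂μ ≤ t := by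
      rw [← hmean i]
      apply integral_mono (hY2int i) (hYint i)
      intro ω
      show Y i ω j ^ 2 ≤ Y i ω j
      nlinarith [mul_nonneg (hYb i ω).1 (sub_nonneg.mpr (hYb i ω).2)]
    rw [e1, e2]
    nlinarith
  set W : Ω → ℝ := ∑ i, Z i with hW
  have hWapp : ∀ ω, W ω = ∑ i, Z i ω := by
    intro ω; simp [hW, Finset.sum_apply]
  have hWfun : W = fun ω => ∑ i, Z i ω := funext hWapp
  have hWmeas : Measurable W := by
    rw [hWfun]; exact Finset.measurable_sum _ (fun i _ => hZmeas i)
  have hWbd : ∀ ω, |W ω| ≤ n := by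
    intro ω
    rw [hWapp]
    calc |∑ i, Z i ω| ≤ ∑ i, |Z i ω| := Finset.abs_sum_le_sum_abs _ _
      _ ≤ ∑ _i : Fin n, (1:ℝ) := Finset.sum_le_sum (fun i _ => hZbd i ω)
      _ = n := by simp
  have hWLp : MemLp W 2 μ := aux_memLp hWmeas n hWbd
  have hWmean : ∫ ω, W ω ∂μ = 0 := by
    have e : ∫ ω, W ω ∂μ = ∑ i, ∫ ω, Z i ω ∂μ := by
      simp only [hWapp]
      exact integral_finset_sum Finset.univ (fun i _ => (hZLp i).integrable one_le_two)
    rw [e]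
    exact Finset.sum_eq_zero (fun i _ => hZmean i)
  have hEW2 : ∫ ω, (W ω) ^ 2 ∂μ ≤ n * t := by
    have h1 : variance W μ = μ[W ^ (2 : ℕ)] :=
      variance_of_integral_eq_zero hWmeas.aemeasurable hWmean
    have h2 : (μ[W ^ (2 : ℕ)]) = ∫ ω, (W ω) ^ 2 ∂μ := by
      apply integral_congr_ae; filter_upwards with ω; simp
    rw [← h2, ← h1, hW, hvar_sum]
    calc ∑ i, variance (Z i) μ ≤ ∑ _i : Fin n, t := Finset.sum_le_sum (fun i _ => hvar_i i)
      _ = n * t := by simp [mul_comm]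
  have habs : ∫ ω, |W ω| ∂μ ≤ Real.sqrt (n * t) := by
    refine le_trans (aux_abs_le_sqrt hWmeas n hWbd) ?_
    exact Real.sqrt_le_sqrt hEW2
  have hpt : ∀ ω, |(1 / n : ℝ) * ∑ i, Y i ω j - t| = (1 / n : ℝ) * |W ω| := by
    intro ω
    have hWs : W ω = (∑ i, Y i ω j) - n * t := by
      rw [hWapp]
      simp only [hZ]
      rw [Finset.sum_sub_distrib]
      simp [mul_comm]
    have : (1 / n : ℝ) * ∑ i, Y i ω j - t = (1 / n : ℝ) * W ω := by
      rw [hWs]; field_simp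
    rw [this, abs_mul, abs_of_nonneg (by positivity : (0:ℝ) ≤ 1 / n)]
  calc ∫ ω, |(1 / n : ℝ) * ∑ i, Y i ω j - t| ∂μ
      = ∫ ω, (1 / n : ℝ) * |W ω| ∂μ := by
        apply integral_congr_ae; filter_upwards with ω; rw [hpt]
    _ = (1 / n : ℝ) * ∫ ω, |W ω| ∂μ := integral_const_mul _ _
    _ ≤ (1 / n : ℝ) * Real.sqrt (n * t) := by
        apply mul_le_mul_of_nonneg_left habs (by positivity)
    _ = Real.sqrt (t / n) := by
        rw [Real.sqrt_mul (le_of_lt hn') t, Real.sqrt_div ht0]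
        have hsq : Real.sqrt n * Real.sqrt n = n := Real.mul_self_sqrt (le_of_lt hn')
        have hsn : (0:ℝ) < Real.sqrt n := Real.sqrt_pos.mpr hn'
        field_simp
        nlinarith [Real.sqrt_nonneg t]


/-- In the adversarial contamination setup, the sample mean satisfies
`E[d_TV(X̄_n, θ*)] ≤ (s/n)^{1/2} + 2ε`. -/
theorem sample_mean_TV_risk_adversarial
    {Ω : Type} [MeasurableSpace Ω] (μ : Measure Ω) [IsProbabilityMeasure μ]
    (k s n : ℕ) (hk : 1 ≤ k) (hs1 : 1 ≤ s) (hsk : s ≤ k) (hn : 1 ≤ n)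
    (ε : ℝ) (hε0 : 0 ≤ ε) (hε1 : ε ≤ 1)
    (Y X : Fin n → Ω → Fin k → ℝ)
    (hYmeas : ∀ i, Measurable (Y i)) (hXmeas : ∀ i, Measurable (X i))
    (hYindep : iIndepFun Y μ)
    (hYid : ∀ i j, IdentDistrib (Y i) (Y j) μ μ)
    (hYval : ∀ i ω, Y i ω ∈ simplex k)
    (hXval : ∀ i ω, X i ω ∈ simplex k)
    (θ : Fin k → ℝ) (hθ : θ ∈ simplex k) (hθsparse : sparse s θ)
    (hθmean : ∀ i j, ∫ ω, Y i ω j ∂μ = θ j)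
    (hcontam : ∀ᵐ ω ∂μ,
      ((Finset.univ.filter fun i => X i ω ≠ Y i ω).card : ℝ) ≤ ε * n) :
    ∫ ω, dTV (fun j => (1 / n : ℝ) * ∑ i, X i ω j) θ ∂μ ≤
      Real.sqrt (s / n) + 2 * ε := by
  classical
  have hn' : (0:ℝ) < n := by exact_mod_cast hn
  set F : Ω → ℝ := fun ω => dTV (fun j => (1 / n : ℝ) * ∑ i, X i ω j) θ with hF
  set G : Ω → ℝ := fun ω => dTV (fun j => (1 / n : ℝ) * ∑ i, Y i ω j) θ with hG
  have hXjmeas : ∀ i (j : Fin k), Measurable (fun ω => X i ω j) :=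
    fun i j => (measurable_pi_apply j).comp (hXmeas i)
  have hYjmeas : ∀ i (j : Fin k), Measurable (fun ω => Y i ω j) :=
    fun i j => (measurable_pi_apply j).comp (hYmeas i)
  have hFmeas : Measurable F := by
    apply Measurable.const_mul
    exact Finset.measurable_sum _ fun j _ =>
      (((Finset.measurable_sum _ fun i _ => hXjmeas i j).const_mul _).sub
        measurable_const).abs
  have hGmeas : Measurable G := by
    apply Measurable.const_mul
    exact Finset.measurable_sum _ fun j _ =>
      (((Finset.measurable_sum _ fun i _ => hYjmeas i j).const_mul _).sub
        measurable_const).abs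
  have hFbd : ∀ ω, |F ω| ≤ 1 := by
    intro ω
    rw [abs_of_nonneg (dTV_nonneg _ _)]
    exact dTV_le_one (mean_in_simplex hn _ (fun i => hXval i ω)) hθ
  have hGbd : ∀ ω, |G ω| ≤ 1 := by
    intro ω
    rw [abs_of_nonneg (dTV_nonneg _ _)]
    exact dTV_le_one (mean_in_simplex hn _ (fun i => hYval i ω)) hθ
  have hFint : Integrable F μ := aux_integrable hFmeas 1 hFbd
  have hGint : Integrable G μ := aux_integrable hGmeas 1 hGbd
  -- pointwise a.e. bound F ≤ G + 2ε
  have hae : ∀ᵐ ω ∂μ, F ω ≤ G ω + 2 * ε := by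
    filter_upwards [hcontam] with ω hω
    set c : ℕ := (Finset.univ.filter fun i => X i ω ≠ Y i ω).card with hc
    have htri := dTV_triangle (fun j => (1 / n : ℝ) * ∑ i, X i ω j)
      (fun j => (1 / n : ℝ) * ∑ i, Y i ω j) θ
    have hXY : dTV (fun j => (1 / n : ℝ) * ∑ i, X i ω j)
        (fun j => (1 / n : ℝ) * ∑ i, Y i ω j) ≤ (c : ℝ) / n := by
      unfold dTV
      have step1 : ∀ j : Fin k, |(1 / n : ℝ) * ∑ i, X i ω j - (1 / n : ℝ) * ∑ i, Y i ω j|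
          ≤ (1 / n : ℝ) * ∑ i, |X i ω j - Y i ω j| := by
        intro j
        have e : (1 / n : ℝ) * ∑ i, X i ω j - (1 / n : ℝ) * ∑ i, Y i ω j
            = (1 / n : ℝ) * ∑ i, (X i ω j - Y i ω j) := by
          rw [Finset.sum_sub_distrib]; ring
        rw [e, abs_mul, abs_of_nonneg (by positivity : (0:ℝ) ≤ 1 / n)]
        exact mul_le_mul_of_nonneg_left (Finset.abs_sum_le_sum_abs _ _) (by positivity)
      have step3 : ∀ i, ∑ j, |X i ω j - Y i ω j| ≤ (2:ℝ) := by
        intro i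
        have h1 : ∑ j, |X i ω j - Y i ω j| ≤ ∑ j, (X i ω j + Y i ω j) :=
          Finset.sum_le_sum fun j _ => abs_le.mpr
            ⟨by linarith [(hXval i ω).1 j, (hYval i ω).1 j],
             by linarith [(hXval i ω).1 j, (hYval i ω).1 j]⟩
        rw [Finset.sum_add_distrib, (hXval i ω).2, (hYval i ω).2] at h1
        linarith
      have hzero : ∀ i ∈ Finset.univ,
          i ∉ (Finset.univ.filter fun i => X i ω ≠ Y i ω) →
          ∑ j, |X i ω j - Y i ω j| = 0 := by
        intro i _ hi
        simp only [Finset.mem_filter, Finset.mem_univ, true_and, not_not] at hi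
        exact Finset.sum_eq_zero fun j _ => by rw [congrFun hi j]; simp
      have step4 : ∑ i, ∑ j, |X i ω j - Y i ω j| ≤ 2 * c := by
        rw [← Finset.sum_subset (Finset.filter_subset _ Finset.univ) hzero]
        calc ∑ i ∈ (Finset.univ.filter fun i => X i ω ≠ Y i ω), ∑ j, |X i ω j - Y i ω j|
            ≤ ∑ _i ∈ (Finset.univ.filter fun i => X i ω ≠ Y i ω), (2:ℝ) :=
              Finset.sum_le_sum fun i _ => step3 i
          _ = 2 * c := by rw [Finset.sum_const, hc, nsmul_eq_mul, mul_comm]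
      calc (1/2 : ℝ) * ∑ j, |(1 / n : ℝ) * ∑ i, X i ω j - (1 / n : ℝ) * ∑ i, Y i ω j|
          ≤ (1/2 : ℝ) * ∑ j, (1 / n : ℝ) * ∑ i, |X i ω j - Y i ω j| := by
            apply mul_le_mul_of_nonneg_left (Finset.sum_le_sum fun j _ => step1 j)
            norm_num
        _ = (1/2 : ℝ) * ((1 / n : ℝ) * ∑ i, ∑ j, |X i ω j - Y i ω j|) := by
            rw [← Finset.mul_sum, Finset.sum_comm]
        _ ≤ (1/2 : ℝ) * ((1 / n : ℝ) * (2 * c)) := by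
            apply mul_le_mul_of_nonneg_left _ (by norm_num)
            apply mul_le_mul_of_nonneg_left step4
            positivity
        _ = (c : ℝ) / n := by field_simp
    have hcε : (c : ℝ) / n ≤ ε := by
      rw [div_le_iff₀ hn']
      exact hω
    have : F ω ≤ G ω + (c : ℝ) / n := by
      rw [hF, hG]
      calc dTV (fun j => (1 / n : ℝ) * ∑ i, X i ω j) θ
          ≤ dTV (fun j => (1 / n : ℝ) * ∑ i, X i ω j)
              (fun j => (1 / n : ℝ) * ∑ i, Y i ω j)
            + dTV (fun j => (1 / n : ℝ) * ∑ i, Y i ω j) θ := htri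
        _ ≤ (c : ℝ) / n + dTV (fun j => (1 / n : ℝ) * ∑ i, Y i ω j) θ := by
            linarith [hXY]
        _ = dTV (fun j => (1 / n : ℝ) * ∑ i, Y i ω j) θ + (c : ℝ) / n := by ring
    linarith [hcε]
  -- clean part
  have hGle : ∫ ω, G ω ∂μ ≤ Real.sqrt (s / n) := by
    have hgjmeas : ∀ j : Fin k, Measurable (fun ω => |(1 / n : ℝ) * ∑ i, Y i ω j - θ j|) :=
      fun j => (((Finset.measurable_sum _ fun i _ => hYjmeas i j).const_mul _).sub
        measurable_const).abs
    have hgjbd : ∀ (j : Fin k) ω, |(|(1 / n : ℝ) * ∑ i, Y i ω j - θ j|)| ≤ 2 := by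
      intro j ω
      rw [abs_abs]
      have h1 := simplex_coord (mean_in_simplex hn _ (fun i => hYval i ω)) j
      have h2 := simplex_coord hθ j
      rw [abs_le]
      constructor <;> [linarith [h1.1, h2.2]; linarith [h1.2, h2.1]]
    have hgjint : ∀ j : Fin k, Integrable (fun ω => |(1 / n : ℝ) * ∑ i, Y i ω j - θ j|) μ :=
      fun j => aux_integrable (hgjmeas j) 2 (hgjbd j)
    have hsplit : ∫ ω, G ω ∂μ
        = (1/2 : ℝ) * ∑ j, ∫ ω, |(1 / n : ℝ) * ∑ i, Y i ω j - θ j| ∂μ := by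
      rw [hG]
      unfold dTV
      rw [integral_const_mul]
      congr 1
      exact integral_finset_sum Finset.univ (fun j _ => hgjint j)
    have hperj : ∀ j : Fin k, ∫ ω, |(1 / n : ℝ) * ∑ i, Y i ω j - θ j| ∂μ
        ≤ Real.sqrt (θ j / n) :=
      fun j => aux_coord hn Y hYmeas hYindep hYval j (θ j) (hθ.1 j)
        ((simplex_coord hθ j).2) (fun i => hθmean i j)
    have hsumsqrt : ∑ j, Real.sqrt (θ j) ≤ Real.sqrt s := by
      set T := Finset.univ.filter fun j : Fin k => θ j ≠ 0 with hT
      have he : ∑ j, Real.sqrt (θ j) = ∑ j ∈ T, Real.sqrt (θ j) := by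
        refine (Finset.sum_subset (Finset.subset_univ T) fun j _ hj => ?_).symm
        simp only [hT, Finset.mem_filter, Finset.mem_univ, true_and, not_not] at hj
        rw [hj, Real.sqrt_zero]
      rw [he]
      apply Real.le_sqrt_of_sq_le
      calc (∑ j ∈ T, Real.sqrt (θ j)) ^ 2 ≤ (T.card : ℝ) * ∑ j ∈ T, Real.sqrt (θ j) ^ 2 :=
            sq_sum_le_card_mul_sum_sq
        _ = (T.card : ℝ) * ∑ j ∈ T, θ j := by
            congr 1
            exact Finset.sum_congr rfl fun j _ => Real.sq_sqrt (hθ.1 j)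
        _ ≤ (s : ℝ) * 1 := by
            apply mul_le_mul
            · exact_mod_cast hθsparse
            · rw [← hθ.2]
              exact Finset.sum_le_sum_of_subset_of_nonneg (Finset.filter_subset _ _)
                (fun j _ _ => hθ.1 j)
            · exact Finset.sum_nonneg fun j _ => hθ.1 j
            · positivity
        _ = s := mul_one _
    have hsq : Real.sqrt (s / n) = Real.sqrt s / Real.sqrt n :=
      Real.sqrt_div (by positivity) _
    have hsn : (0:ℝ) < Real.sqrt n := Real.sqrt_pos.mpr hn'
    calc ∫ ω, G ω ∂μ
        = (1/2 : ℝ) * ∑ j, ∫ ω, |(1 / n : ℝ) * ∑ i, Y i ω j - θ j| ∂μ := hsplit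
      _ ≤ (1/2 : ℝ) * ∑ j, Real.sqrt (θ j / n) := by
          apply mul_le_mul_of_nonneg_left (Finset.sum_le_sum fun j _ => hperj j)
          norm_num
      _ = (1/2 : ℝ) * ((∑ j, Real.sqrt (θ j)) / Real.sqrt n) := by
          rw [Finset.sum_div]
          congr 1
          exact Finset.sum_congr rfl fun j _ => Real.sqrt_div (hθ.1 j) _
      _ ≤ (1/2 : ℝ) * (Real.sqrt s / Real.sqrt n) := by
          gcongr
      _ ≤ Real.sqrt (s / n) := by
          rw [hsq]
          have : 0 ≤ Real.sqrt s / Real.sqrt n := by positivity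
          linarith
  calc ∫ ω, F ω ∂μ ≤ ∫ ω, (G ω + 2 * ε) ∂μ := by
        apply integral_mono_ae hFint (hGint.add (integrable_const _)) hae
    _ = (∫ ω, G ω ∂μ) + 2 * ε := by
        rw [integral_add hGint (integrable_const _), integral_const]
        simp
    _ ≤ Real.sqrt (s / n) + 2 * ε := by linarith [hGle]
end
end

section
/- In the adversarial contamination setup, for every triple of positive integers (k,s,n) with 1 ≤ s ≤ k and every ε ∈ [0,1], the sample mean satisfies E[d_H(X̄_n, θ*)] ≤ (s/n)^{1/2} + 2 ε^{1/2}. -/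
open MeasureTheory ProbabilityTheory

noncomputable section

/-- Hellinger distance between two points of the simplex. -/
def dH {k : ℕ} (u v : Fin k → ℝ) : ℝ :=
  Real.sqrt (∑ j, (Real.sqrt (u j) - Real.sqrt (v j)) ^ 2)

lemma my_sqrt_sub_sq_le_abs {a b : ℝ} (ha : 0 ≤ a) (hb : 0 ≤ b) :
    (Real.sqrt a - Real.sqrt b)^2 ≤ |a - b| := by
  rcases abs_cases (a - b) with ⟨h, _⟩ | ⟨h, _⟩ <;> rw [h] <;>
    nlinarith [Real.sq_sqrt ha, Real.sq_sqrt hb, Real.sqrt_nonneg a, Real.sqrt_nonneg b,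
      mul_nonneg (Real.sqrt_nonneg a) (Real.sqrt_nonneg b), sq_nonneg (Real.sqrt a - Real.sqrt b),
      sq_nonneg (Real.sqrt a + Real.sqrt b)]

lemma my_sqrt_sub_sq_le_div {a b : ℝ} (ha : 0 ≤ a) (hb : 0 < b) :
    (Real.sqrt a - Real.sqrt b)^2 ≤ (a - b)^2 / b := by
  rw [le_div_iff₀ hb]
  nlinarith [Real.sq_sqrt ha, Real.sq_sqrt hb.le, Real.sqrt_nonneg a, Real.sqrt_nonneg b,
    mul_nonneg (Real.sqrt_nonneg a) (Real.sqrt_nonneg b), sq_nonneg (Real.sqrt a - Real.sqrt b),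
    mul_nonneg (mul_nonneg (Real.sqrt_nonneg a) (Real.sqrt_nonneg b))
      (sq_nonneg (Real.sqrt a - Real.sqrt b))]

lemma my_l2_triangle {k : ℕ} (x y z : Fin k → ℝ) :
    Real.sqrt (∑ j, (x j - z j)^2) ≤
      Real.sqrt (∑ j, (x j - y j)^2) + Real.sqrt (∑ j, (y j - z j)^2) := by
  have h := dist_triangle ((WithLp.equiv 2 (Fin k → ℝ)).symm x)
    ((WithLp.equiv 2 (Fin k → ℝ)).symm y) ((WithLp.equiv 2 (Fin k → ℝ)).symm z)
  simpa [EuclideanSpace.dist_eq, Real.dist_eq, sq_abs, WithLp.equiv_symm_apply, PiLp.toLp_apply] using h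

lemma my_dH_triangle {k : ℕ} (u v w : Fin k → ℝ) : dH u w ≤ dH u v + dH v w := by
  have h := my_l2_triangle (fun j => Real.sqrt (u j)) (fun j => Real.sqrt (v j))
    (fun j => Real.sqrt (w j))
  simpa [dH] using h

lemma my_dH_nonneg {k : ℕ} (u v : Fin k → ℝ) : 0 ≤ dH u v := Real.sqrt_nonneg _

lemma my_dH_sq_le {k : ℕ} {u v : Fin k → ℝ} (hu : u ∈ simplex k) (hv : v ∈ simplex k) :
    ∑ j, (Real.sqrt (u j) - Real.sqrt (v j)) ^ 2 ≤ 2 := by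
  have h1 : ∑ j, (Real.sqrt (u j) - Real.sqrt (v j)) ^ 2 ≤ ∑ j, (u j + v j) := by
    refine Finset.sum_le_sum fun j _ => ?_
    nlinarith [Real.sq_sqrt (hu.1 j), Real.sq_sqrt (hv.1 j),
      mul_nonneg (Real.sqrt_nonneg (u j)) (Real.sqrt_nonneg (v j))]
  calc ∑ j, (Real.sqrt (u j) - Real.sqrt (v j)) ^ 2 ≤ ∑ j, (u j + v j) := h1
    _ = 2 := by rw [Finset.sum_add_distrib, hu.2, hv.2]; norm_num

lemma my_dH_le_two {k : ℕ} {u v : Fin k → ℝ} (hu : u ∈ simplex k) (hv : v ∈ simplex k) :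
    dH u v ≤ 2 := by
  have h := my_dH_sq_le hu hv
  have : dH u v ≤ Real.sqrt 4 := Real.sqrt_le_sqrt (by linarith)
  have h4 : Real.sqrt 4 = 2 := by
    rw [show (4:ℝ) = 2^2 by norm_num, Real.sqrt_sq (by norm_num)]
  linarith

lemma my_integrable_of_bound {Ω : Type} [MeasurableSpace Ω] {μ : Measure Ω} [IsFiniteMeasure μ]
    {f : Ω → ℝ} (hm : AEStronglyMeasurable f μ) (C : ℝ) (h : ∀ ω, |f ω| ≤ C) :
    Integrable f μ :=
  Integrable.mono' (integrable_const C) hm (ae_of_all _ h)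

lemma my_integral_le_sqrt {Ω : Type} [MeasurableSpace Ω] (μ : Measure Ω) [IsProbabilityMeasure μ]
    {f : Ω → ℝ} (hf : MemLp f 2 μ) (h0 : ∀ ω, 0 ≤ f ω) :
    ∫ ω, f ω ∂μ ≤ Real.sqrt (∫ ω, (f ω)^2 ∂μ) := by
  have hv := variance_nonneg f μ
  rw [variance_eq_sub hf] at hv
  simp only [Pi.pow_apply] at hv
  have h1 : (0:ℝ) ≤ ∫ ω, f ω ∂μ := integral_nonneg h0
  have h2 : (0:ℝ) ≤ ∫ ω, (f ω)^2 ∂μ := integral_nonneg fun ω => sq_nonneg _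
  rw [Real.le_sqrt h1 h2]
  linarith

/-- In the adversarial contamination setup, the sample mean satisfies
`E[d_H(X̄_n, θ*)] ≤ (s/n)^{1/2} + 2·ε^{1/2}`. -/
theorem sample_mean_Hellinger_risk_adversarial
    {Ω : Type} [MeasurableSpace Ω] (μ : Measure Ω) [IsProbabilityMeasure μ]
    (k s n : ℕ) (hk : 1 ≤ k) (hs1 : 1 ≤ s) (hsk : s ≤ k) (hn : 1 ≤ n)
    (ε : ℝ) (hε0 : 0 ≤ ε) (hε1 : ε ≤ 1)
    (Y X : Fin n → Ω → Fin k → ℝ)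
    (hYmeas : ∀ i, Measurable (Y i)) (hXmeas : ∀ i, Measurable (X i))
    (hYindep : iIndepFun Y μ)
    (hYid : ∀ i j, IdentDistrib (Y i) (Y j) μ μ)
    (hYval : ∀ i ω, Y i ω ∈ simplex k)
    (hXval : ∀ i ω, X i ω ∈ simplex k)
    (θ : Fin k → ℝ) (hθ : θ ∈ simplex k) (hθsparse : sparse s θ)
    (hθmean : ∀ i j, ∫ ω, Y i ω j ∂μ = θ j)
    (hcontam : ∀ᵐ ω ∂μ,
      ((Finset.univ.filter fun i => X i ω ≠ Y i ω).card : ℝ) ≤ ε * n) :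
    ∫ ω, dH (fun j => (1 / n : ℝ) * ∑ i, X i ω j) θ ∂μ ≤
      Real.sqrt (s / n) + 2 * Real.sqrt ε := by
  classical
  have hn' : (0:ℝ) < n := by exact_mod_cast hn
  set Xb : Ω → Fin k → ℝ := fun ω j => (1 / n : ℝ) * ∑ i, X i ω j with hXbdef
  set Yb : Ω → Fin k → ℝ := fun ω j => (1 / n : ℝ) * ∑ i, Y i ω j with hYbdef
  -- coordinates of Y, X lie in [0,1]
  have hY01 : ∀ i ω j, 0 ≤ Y i ω j ∧ Y i ω j ≤ 1 := by
    intro i ω j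
    refine ⟨(hYval i ω).1 j, ?_⟩
    have := Finset.single_le_sum (f := fun j => Y i ω j)
      (fun j _ => (hYval i ω).1 j) (Finset.mem_univ j)
    rw [(hYval i ω).2] at this; exact this
  have hX01 : ∀ i ω j, 0 ≤ X i ω j ∧ X i ω j ≤ 1 := by
    intro i ω j
    refine ⟨(hXval i ω).1 j, ?_⟩
    have := Finset.single_le_sum (f := fun j => X i ω j)
      (fun j _ => (hXval i ω).1 j) (Finset.mem_univ j)
    rw [(hXval i ω).2] at this; exact this
  -- Xb, Yb lie in the simplex
  have hmean_simplex : ∀ (Z : Fin n → Ω → Fin k → ℝ), (∀ i ω, Z i ω ∈ simplex k) →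
      ∀ ω, (fun j => (1 / n : ℝ) * ∑ i, Z i ω j) ∈ simplex k := by
    intro Z hZ ω
    constructor
    · intro j
      exact mul_nonneg (by positivity) (Finset.sum_nonneg fun i _ => (hZ i ω).1 j)
    · have : ∑ j, (1 / n : ℝ) * ∑ i, Z i ω j = (1 / n : ℝ) * ∑ j, ∑ i, Z i ω j := by
        rw [Finset.mul_sum]
      rw [this, Finset.sum_comm]
      have : ∑ i, ∑ j, Z i ω j = (n : ℝ) := by
        rw [Finset.sum_congr rfl fun i _ => (hZ i ω).2]; simp
      rw [this]; field_simp
  have hXbs : ∀ ω, Xb ω ∈ simplex k := hmean_simplex X hXval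
  have hYbs : ∀ ω, Yb ω ∈ simplex k := hmean_simplex Y hYval
  -- measurability of coordinates
  have hYjm : ∀ i j, Measurable fun ω => Y i ω j :=
    fun i j => (measurable_pi_apply j).comp (hYmeas i)
  have hXjm : ∀ i j, Measurable fun ω => X i ω j :=
    fun i j => (measurable_pi_apply j).comp (hXmeas i)
  have hYbjm : ∀ j, Measurable fun ω => Yb ω j := by
    intro j
    exact (Finset.measurable_sum Finset.univ fun i _ => hYjm i j).const_mul _
  have hXbjm : ∀ j, Measurable fun ω => Xb ω j := by
    intro j
    exact (Finset.measurable_sum Finset.univ fun i _ => hXjm i j).const_mul _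
  -- the three functions
  set F : Ω → ℝ := fun ω => dH (Xb ω) θ with hFdef
  set g : Ω → ℝ := fun ω => dH (Yb ω) θ with hgdef
  set h : Ω → ℝ := fun ω => dH (Xb ω) (Yb ω) with hhdef
  have hFm : Measurable F := by
    apply Measurable.sqrt
    exact Finset.measurable_sum Finset.univ fun j _ =>
      (((hXbjm j).sqrt.sub measurable_const).pow_const 2)
  have hgm : Measurable g := by
    apply Measurable.sqrt
    exact Finset.measurable_sum Finset.univ fun j _ =>
      (((hYbjm j).sqrt.sub measurable_const).pow_const 2)
  have hhm : Measurable h := by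
    apply Measurable.sqrt
    exact Finset.measurable_sum Finset.univ fun j _ =>
      (((hXbjm j).sqrt.sub (hYbjm j).sqrt).pow_const 2)
  have hFbd : ∀ ω, |F ω| ≤ 2 := fun ω =>
    abs_le.mpr ⟨by linarith [my_dH_nonneg (Xb ω) θ], my_dH_le_two (hXbs ω) hθ⟩
  have hgbd : ∀ ω, |g ω| ≤ 2 := fun ω =>
    abs_le.mpr ⟨by linarith [my_dH_nonneg (Yb ω) θ], my_dH_le_two (hYbs ω) hθ⟩
  have hhbd : ∀ ω, |h ω| ≤ 2 := fun ω =>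
    abs_le.mpr ⟨by linarith [my_dH_nonneg (Xb ω) (Yb ω)], my_dH_le_two (hXbs ω) (hYbs ω)⟩
  have hFint : Integrable F μ := my_integrable_of_bound hFm.aestronglyMeasurable 2 hFbd
  have hgint : Integrable g μ := my_integrable_of_bound hgm.aestronglyMeasurable 2 hgbd
  have hhint : Integrable h μ := my_integrable_of_bound hhm.aestronglyMeasurable 2 hhbd
  -- triangle inequality
  have htri : ∀ ω, F ω ≤ g ω + h ω := by
    intro ω
    have := my_dH_triangle (Xb ω) (Yb ω) θ
    have hsymm : dH (Yb ω) θ = g ω := rfl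
    -- dH is symmetric
    have hsym : dH (Xb ω) (Yb ω) = h ω := rfl
    calc F ω ≤ dH (Xb ω) (Yb ω) + dH (Yb ω) θ := this
      _ = g ω + h ω := by rw [hsymm, hsym]; ring
  -- bound on ∫ h
  have hhb : ∀ᵐ ω ∂μ, h ω ≤ Real.sqrt (2 * ε) := by
    filter_upwards [hcontam] with ω hc
    have hS : ∑ j, (Real.sqrt (Xb ω j) - Real.sqrt (Yb ω j)) ^ 2 ≤ 2 * ε := by
      have h1 : ∑ j, (Real.sqrt (Xb ω j) - Real.sqrt (Yb ω j)) ^ 2 ≤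
          ∑ j, |Xb ω j - Yb ω j| :=
        Finset.sum_le_sum fun j _ =>
          my_sqrt_sub_sq_le_abs ((hXbs ω).1 j) ((hYbs ω).1 j)
      have h2 : ∀ j, |Xb ω j - Yb ω j| ≤ (1 / n : ℝ) * ∑ i, |X i ω j - Y i ω j| := by
        intro j
        have : Xb ω j - Yb ω j = (1 / n : ℝ) * ∑ i, (X i ω j - Y i ω j) := by
          simp only [hXbdef, hYbdef]
          rw [← mul_sub, ← Finset.sum_sub_distrib]
        rw [this, abs_mul, abs_of_nonneg (by positivity : (0:ℝ) ≤ (1/n:ℝ))]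
        exact mul_le_mul_of_nonneg_left (Finset.abs_sum_le_sum_abs _ _) (by positivity)
      have h3 : ∑ j, |Xb ω j - Yb ω j| ≤
          (1 / n : ℝ) * ∑ i, ∑ j, |X i ω j - Y i ω j| := by
        calc ∑ j, |Xb ω j - Yb ω j| ≤ ∑ j, (1 / n : ℝ) * ∑ i, |X i ω j - Y i ω j| :=
              Finset.sum_le_sum fun j _ => h2 j
          _ = (1 / n : ℝ) * ∑ j, ∑ i, |X i ω j - Y i ω j| := by rw [Finset.mul_sum]
          _ = (1 / n : ℝ) * ∑ i, ∑ j, |X i ω j - Y i ω j| := by rw [Finset.sum_comm]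
      have h4 : ∀ i, ∑ j, |X i ω j - Y i ω j| ≤ if X i ω ≠ Y i ω then 2 else 0 := by
        intro i
        by_cases hi : X i ω = Y i ω
        · simp [hi]
        · simp only [hi, ne_eq, not_false_eq_true, if_true]
          calc ∑ j, |X i ω j - Y i ω j| ≤ ∑ j, (X i ω j + Y i ω j) := by
                refine Finset.sum_le_sum fun j _ => ?_
                rw [abs_sub_le_iff]
                constructor <;> linarith [(hY01 i ω j).1, (hX01 i ω j).1]
            _ = 2 := by rw [Finset.sum_add_distrib, (hXval i ω).2, (hYval i ω).2]; norm_num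
      have h5 : ∑ i, ∑ j, |X i ω j - Y i ω j| ≤
          2 * ((Finset.univ.filter fun i => X i ω ≠ Y i ω).card : ℝ) := by
        calc ∑ i, ∑ j, |X i ω j - Y i ω j| ≤ ∑ i, if X i ω ≠ Y i ω then (2:ℝ) else 0 :=
              Finset.sum_le_sum fun i _ => h4 i
          _ = ∑ i ∈ Finset.univ.filter fun i => X i ω ≠ Y i ω, (2:ℝ) :=
              (Finset.sum_filter _ _).symm
          _ = 2 * ((Finset.univ.filter fun i => X i ω ≠ Y i ω).card : ℝ) := by
              rw [Finset.sum_const]; simp [mul_comm]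
      calc ∑ j, (Real.sqrt (Xb ω j) - Real.sqrt (Yb ω j)) ^ 2
          ≤ (1 / n : ℝ) * ∑ i, ∑ j, |X i ω j - Y i ω j| := le_trans h1 h3
        _ ≤ (1 / n : ℝ) * (2 * (ε * n)) := by
            refine mul_le_mul_of_nonneg_left ?_ (by positivity)
            exact le_trans h5 (by linarith)
        _ = 2 * ε := by field_simp
    have : h ω ≤ Real.sqrt (2 * ε) := Real.sqrt_le_sqrt hS
    exact this
  have hinth : ∫ ω, h ω ∂μ ≤ Real.sqrt (2 * ε) := by
    have := integral_mono_ae hhint (integrable_const (Real.sqrt (2 * ε))) hhb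
    simpa using this
  -- bound on ∫ g
  have hgmem : MemLp g 2 μ :=
    MemLp.of_bound hgm.aestronglyMeasurable 2 (ae_of_all _ fun ω => by
      rw [Real.norm_eq_abs]; exact hgbd ω)
  have hg0 : ∀ ω, 0 ≤ g ω := fun ω => my_dH_nonneg _ _
  have hgsq : ∀ ω, g ω ^ 2 = ∑ j, (Real.sqrt (Yb ω j) - Real.sqrt (θ j)) ^ 2 := by
    intro ω
    exact Real.sq_sqrt (Finset.sum_nonneg fun j _ => sq_nonneg _)
  -- coordinate integrands
  have hcoordm : ∀ j, Measurable fun ω => (Real.sqrt (Yb ω j) - Real.sqrt (θ j)) ^ 2 :=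
    fun j => ((hYbjm j).sqrt.sub measurable_const).pow_const 2
  have hcoordbd : ∀ j ω, |(Real.sqrt (Yb ω j) - Real.sqrt (θ j)) ^ 2| ≤ 2 := by
    intro j ω
    rw [abs_of_nonneg (sq_nonneg _)]
    nlinarith [Real.sq_sqrt ((hYbs ω).1 j), Real.sq_sqrt (hθ.1 j),
      Real.sqrt_nonneg (Yb ω j), Real.sqrt_nonneg (θ j),
      mul_nonneg (Real.sqrt_nonneg (Yb ω j)) (Real.sqrt_nonneg (θ j)),
      Finset.single_le_sum (f := fun j' => Yb ω j') (fun j' _ => (hYbs ω).1 j')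
        (Finset.mem_univ j),
      (hYbs ω).2,
      Finset.single_le_sum (f := fun j' => θ j') (fun j' _ => hθ.1 j') (Finset.mem_univ j),
      hθ.2]
  have hcoordint : ∀ j, Integrable (fun ω => (Real.sqrt (Yb ω j) - Real.sqrt (θ j)) ^ 2) μ :=
    fun j => my_integrable_of_bound (hcoordm j).aestronglyMeasurable 2 (hcoordbd j)
  -- integral of Y coordinates
  have hYjint : ∀ i j, Integrable (fun ω => Y i ω j) μ := by
    intro i j
    refine my_integrable_of_bound (hYjm i j).aestronglyMeasurable 1 fun ω => ?_
    rw [abs_of_nonneg (hY01 i ω j).1]; exact (hY01 i ω j).2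
  have hYbj_integral : ∀ j, ∫ ω, Yb ω j ∂μ = θ j := by
    intro j
    simp only [hYbdef]
    rw [integral_const_mul, integral_finset_sum Finset.univ fun i _ => hYjint i j]
    simp only [hθmean]
    rw [Finset.sum_const]
    simp
    field_simp
  -- per-coordinate bound
  have hcoordI : ∀ j, ∫ ω, (Real.sqrt (Yb ω j) - Real.sqrt (θ j)) ^ 2 ∂μ ≤
      if θ j = 0 then (0:ℝ) else (1 / (n:ℝ)) := by
    intro j
    by_cases hj : θ j = 0
    · rw [if_pos hj]
      have hYbj0 : (fun ω => Yb ω j) =ᵐ[μ] 0 := by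
        have hint : Integrable (fun ω => Yb ω j) μ := by
          refine my_integrable_of_bound (hYbjm j).aestronglyMeasurable 1 fun ω => ?_
          rw [abs_of_nonneg ((hYbs ω).1 j)]
          have := Finset.single_le_sum (f := fun j' => Yb ω j') (fun j' _ => (hYbs ω).1 j')
            (Finset.mem_univ j)
          rw [(hYbs ω).2] at this; exact this
        have := (integral_eq_zero_iff_of_nonneg (fun ω => (hYbs ω).1 j) hint).mp
          (by rw [hYbj_integral j, hj])
        exact this
      have : (fun ω => (Real.sqrt (Yb ω j) - Real.sqrt (θ j)) ^ 2) =ᵐ[μ] 0 := by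
        filter_upwards [hYbj0] with ω hω
        simp only [Pi.zero_apply] at hω ⊢
        rw [hω, hj]
        simp
      rw [integral_congr_ae this]
      simp
    · rw [if_neg hj]
      have hθj : 0 < θ j := lt_of_le_of_ne (hθ.1 j) (Ne.symm hj)
      -- second moment bound via variance
      set Sj : Ω → ℝ := fun ω => ∑ i, Y i ω j with hSjdef
      have hSjm : Measurable Sj := Finset.measurable_sum Finset.univ fun i _ => hYjm i j
      have hSjint : ∫ ω, Sj ω ∂μ = n * θ j := by
        simp only [hSjdef]
        rw [integral_finset_sum Finset.univ fun i _ => hYjint i j]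
        simp [hθmean]
      have hYijmem : ∀ i, MemLp (fun ω => Y i ω j) 2 μ :=
        fun i => MemLp.of_bound (hYjm i j).aestronglyMeasurable 1 (ae_of_all _ fun ω => by
          rw [Real.norm_eq_abs, abs_of_nonneg (hY01 i ω j).1]; exact (hY01 i ω j).2)
      have hvar_sum : variance Sj μ = ∑ i, variance (fun ω => Y i ω j) μ := by
        have heq : Sj = ∑ i, (fun ω => Y i ω j) := by
          funext ω; simp [hSjdef, Finset.sum_apply]
        rw [heq]
        refine IndepFun.variance_sum (fun i _ => hYijmem i) ?_
        intro i _ i' _ hii'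
        have := (hYindep.indepFun hii').comp (measurable_pi_apply j) (measurable_pi_apply j)
        exact this
      have hvar_each : ∀ i, variance (fun ω => Y i ω j) μ ≤ θ j := by
        intro i
        have h1 := variance_le_expectation_sq (X := fun ω => Y i ω j)
          (hYjm i j).aestronglyMeasurable (μ := μ)
        have h2 : (∫ ω, (fun ω => Y i ω j) ω ^ 2 ∂μ) ≤ ∫ ω, Y i ω j ∂μ := by
          refine integral_mono ?_ (hYjint i j) fun ω => ?_
          · exact my_integrable_of_bound ((hYjm i j).pow_const 2).aestronglyMeasurable 1
              fun ω => by
                rw [abs_of_nonneg (sq_nonneg _)]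
                nlinarith [(hY01 i ω j).1, (hY01 i ω j).2]
          · simp only
            nlinarith [(hY01 i ω j).1, (hY01 i ω j).2]
        simp only [Pi.pow_apply] at h1
        rw [hθmean i j] at h2
        exact le_trans h1 h2
      have hvarSj : variance Sj μ ≤ n * θ j := by
        rw [hvar_sum]
        calc ∑ i, variance (fun ω => Y i ω j) μ ≤ ∑ i : Fin n, θ j :=
            Finset.sum_le_sum fun i _ => hvar_each i
          _ = n * θ j := by rw [Finset.sum_const]; simp
      have hSjmem : MemLp Sj 2 μ :=
        MemLp.of_bound hSjm.aestronglyMeasurable n (ae_of_all _ fun ω => by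
          rw [Real.norm_eq_abs]
          rw [abs_of_nonneg (Finset.sum_nonneg fun i _ => (hY01 i ω j).1)]
          calc ∑ i, Y i ω j ≤ ∑ i : Fin n, (1:ℝ) :=
              Finset.sum_le_sum fun i _ => (hY01 i ω j).2
            _ = n := by simp)
      have hvar_eq : variance Sj μ = ∫ ω, (Sj ω - n * θ j) ^ 2 ∂μ := by
        rw [variance_eq_integral hSjm.aemeasurable, hSjint]
      have hYbθ : ∀ ω, (Yb ω j - θ j) ^ 2 = (1 / n : ℝ)^2 * (Sj ω - n * θ j) ^ 2 := by
        intro ω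
        have : Yb ω j - θ j = (1 / n : ℝ) * (Sj ω - n * θ j) := by
          simp only [hYbdef, hSjdef]
          field_simp
        rw [this, mul_pow]
      have hint2 : ∫ ω, (Yb ω j - θ j) ^ 2 ∂μ ≤ θ j / n := by
        have : ∫ ω, (Yb ω j - θ j) ^ 2 ∂μ = (1 / n : ℝ)^2 * ∫ ω, (Sj ω - n * θ j) ^ 2 ∂μ := by
          rw [← integral_const_mul]
          exact integral_congr_ae (ae_of_all _ fun ω => hYbθ ω)
        rw [this, ← hvar_eq]
        calc (1 / n : ℝ)^2 * variance Sj μ ≤ (1 / n : ℝ)^2 * (n * θ j) :=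
            mul_le_mul_of_nonneg_left hvarSj (by positivity)
          _ = θ j / n := by field_simp
      -- pointwise domination
      have hpt : ∀ ω, (Real.sqrt (Yb ω j) - Real.sqrt (θ j)) ^ 2 ≤
          (1 / θ j) * (Yb ω j - θ j) ^ 2 := by
        intro ω
        have := my_sqrt_sub_sq_le_div ((hYbs ω).1 j) hθj
        rw [div_eq_inv_mul] at this
        simpa [one_div] using this
      have hsqint : Integrable (fun ω => (Yb ω j - θ j) ^ 2) μ := by
        refine my_integrable_of_bound (((hYbjm j).sub measurable_const).pow_const
          2).aestronglyMeasurable 4 fun ω => ?_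
        rw [abs_of_nonneg (sq_nonneg _)]
        have h1 : 0 ≤ Yb ω j := (hYbs ω).1 j
        have h2 : Yb ω j ≤ 1 := by
          have := Finset.single_le_sum (f := fun j' => Yb ω j') (fun j' _ => (hYbs ω).1 j')
            (Finset.mem_univ j)
          rw [(hYbs ω).2] at this; exact this
        have h3 : 0 ≤ θ j := hθ.1 j
        have h4 : θ j ≤ 1 := by
          have := Finset.single_le_sum (f := fun j' => θ j') (fun j' _ => hθ.1 j')
            (Finset.mem_univ j)
          rw [hθ.2] at this; exact this
        nlinarith
      calc ∫ ω, (Real.sqrt (Yb ω j) - Real.sqrt (θ j)) ^ 2 ∂μ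
          ≤ ∫ ω, (1 / θ j) * (Yb ω j - θ j) ^ 2 ∂μ := by
            refine integral_mono (hcoordint j) (hsqint.const_mul _) hpt
        _ = (1 / θ j) * ∫ ω, (Yb ω j - θ j) ^ 2 ∂μ := integral_const_mul _ _
        _ ≤ (1 / θ j) * (θ j / n) :=
            mul_le_mul_of_nonneg_left hint2 (by positivity)
        _ = 1 / n := by field_simp
  -- sum over coordinates
  have hgsqint : ∫ ω, g ω ^ 2 ∂μ ≤ (s : ℝ) / n := by
    have : ∫ ω, g ω ^ 2 ∂μ = ∑ j, ∫ ω, (Real.sqrt (Yb ω j) - Real.sqrt (θ j)) ^ 2 ∂μ := by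
      rw [← integral_finset_sum Finset.univ fun j _ => hcoordint j]
      exact integral_congr_ae (ae_of_all _ fun ω => hgsq ω)
    rw [this]
    calc ∑ j, ∫ ω, (Real.sqrt (Yb ω j) - Real.sqrt (θ j)) ^ 2 ∂μ
        ≤ ∑ j, if θ j = 0 then (0:ℝ) else 1 / n :=
          Finset.sum_le_sum fun j _ => hcoordI j
      _ = ∑ j ∈ Finset.univ.filter fun j => ¬ (θ j = 0), (1 / n : ℝ) := by
          rw [Finset.sum_filter]
          congr 1
          funext j
          by_cases hj : θ j = 0 <;> simp [hj]
      _ = ((Finset.univ.filter fun j => θ j ≠ 0).card : ℝ) * (1 / n) := by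
          rw [Finset.sum_const]; simp [mul_comm]
      _ ≤ (s : ℝ) * (1 / n) := by
          have : ((Finset.univ.filter fun j => θ j ≠ 0).card : ℝ) ≤ s := by
            exact_mod_cast hθsparse
          exact mul_le_mul_of_nonneg_right this (by positivity)
      _ = (s : ℝ) / n := by ring
  have hintg : ∫ ω, g ω ∂μ ≤ Real.sqrt ((s : ℝ) / n) := by
    calc ∫ ω, g ω ∂μ ≤ Real.sqrt (∫ ω, g ω ^ 2 ∂μ) := my_integral_le_sqrt μ hgmem hg0
      _ ≤ Real.sqrt ((s : ℝ) / n) := Real.sqrt_le_sqrt hgsqint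
  -- combine
  have hmain : ∫ ω, F ω ∂μ ≤ ∫ ω, g ω ∂μ + ∫ ω, h ω ∂μ := by
    rw [← integral_add hgint hhint]
    exact integral_mono hFint (hgint.add hhint) htri
  have hsqrt2 : Real.sqrt (2 * ε) ≤ 2 * Real.sqrt ε := by
    rw [Real.sqrt_mul (by norm_num) ε]
    have h2 : Real.sqrt 2 ≤ 2 := by
      nlinarith [Real.sq_sqrt (by norm_num : (0:ℝ) ≤ 2), Real.sqrt_nonneg 2]
    exact mul_le_mul_of_nonneg_right h2 (Real.sqrt_nonneg ε)
  calc ∫ ω, dH (fun j => (1 / n : ℝ) * ∑ i, X i ω j) θ ∂μ = ∫ ω, F ω ∂μ := rfl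
    _ ≤ ∫ ω, g ω ∂μ + ∫ ω, h ω ∂μ := hmain
    _ ≤ Real.sqrt ((s : ℝ) / n) + Real.sqrt (2 * ε) := add_le_add hintg hinth
    _ ≤ Real.sqrt ((s : ℝ) / n) + 2 * Real.sqrt ε := by linarith
end
end

section
/- In the adversarial contamination setup, for every pair of positive integers (k,n) and every ε ∈ [0,1], the sample mean satisfies E[d_{L2}(X̄_n, θ*)] ≤ (1/n)^{1/2} + √2 · ε. -/
open MeasureTheory ProbabilityTheory

noncomputable section

/-- Euclidean (`L²`) distance between two points of the simplex. -/
def dL2 {k : ℕ} (u v : Fin k → ℝ) : ℝ := Real.sqrt (∑ j, (u j - v j) ^ 2)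

lemma simplex_le_one {k : ℕ} {v : Fin k → ℝ} (hv : v ∈ simplex k) (j : Fin k) : v j ≤ 1 := by
  have := Finset.single_le_sum (f := v) (fun i _ => hv.1 i) (Finset.mem_univ j)
  simpa [hv.2] using this

lemma dL2_eq_dist {k : ℕ} (u v : Fin k → ℝ) :
    dL2 u v = dist ((WithLp.equiv 2 (Fin k → ℝ)).symm u) ((WithLp.equiv 2 (Fin k → ℝ)).symm v) := by
  rw [EuclideanSpace.dist_eq]
  simp [dL2, Real.dist_eq, sq_abs]

lemma dL2_eq_norm {k : ℕ} (u v : Fin k → ℝ) :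
    dL2 u v = ‖(WithLp.equiv 2 (Fin k → ℝ)).symm u - (WithLp.equiv 2 (Fin k → ℝ)).symm v‖ := by
  rw [dL2_eq_dist, dist_eq_norm]

lemma dL2_triangle {k : ℕ} (u v w : Fin k → ℝ) : dL2 u w ≤ dL2 u v + dL2 v w := by
  simp only [dL2_eq_dist]; exact dist_triangle _ _ _

lemma dL2_le_sqrt_two {k : ℕ} {u v : Fin k → ℝ} (hu : u ∈ simplex k) (hv : v ∈ simplex k) :
    dL2 u v ≤ Real.sqrt 2 := by
  apply Real.sqrt_le_sqrt
  calc ∑ j, (u j - v j) ^ 2 ≤ ∑ j, (u j + v j) := Finset.sum_le_sum fun j _ => by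
        nlinarith [hu.1 j, hv.1 j, simplex_le_one hu j, simplex_le_one hv j]
    _ = 2 := by rw [Finset.sum_add_distrib, hu.2, hv.2]; norm_num


/-- In the adversarial contamination setup, the sample mean satisfies
`E[d_{L2}(X̄_n, θ*)] ≤ (1/n)^{1/2} + √2·ε`. -/
theorem sample_mean_L2_risk_adversarial
    {Ω : Type} [MeasurableSpace Ω] (μ : Measure Ω) [IsProbabilityMeasure μ]
    (k n : ℕ) (hk : 1 ≤ k) (hn : 1 ≤ n)
    (ε : ℝ) (hε0 : 0 ≤ ε) (hε1 : ε ≤ 1)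
    (Y X : Fin n → Ω → Fin k → ℝ)
    (hYmeas : ∀ i, Measurable (Y i)) (hXmeas : ∀ i, Measurable (X i))
    (hYindep : iIndepFun Y μ)
    (hYid : ∀ i j, IdentDistrib (Y i) (Y j) μ μ)
    (hYval : ∀ i ω, Y i ω ∈ simplex k)
    (hXval : ∀ i ω, X i ω ∈ simplex k)
    (θ : Fin k → ℝ) (hθ : θ ∈ simplex k)
    (hθmean : ∀ i j, ∫ ω, Y i ω j ∂μ = θ j)
    (hcontam : ∀ᵐ ω ∂μ,
      ((Finset.univ.filter fun i => X i ω ≠ Y i ω).card : ℝ) ≤ ε * n) :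
    ∫ ω, dL2 (fun j => (1 / n : ℝ) * ∑ i, X i ω j) θ ∂μ ≤
      Real.sqrt (1 / n) + Real.sqrt 2 * ε := by
  classical
  have hn0 : (0:ℝ) < n := by exact_mod_cast hn
  have hnne : (n:ℝ) ≠ 0 := ne_of_gt hn0
  set f : Ω → ℝ := fun ω => dL2 (fun j => (1 / n : ℝ) * ∑ i, X i ω j) θ with hf
  set g : Ω → ℝ := fun ω => dL2 (fun j => (1 / n : ℝ) * ∑ i, Y i ω j) θ with hg
  -- simplex membership of averages
  have hmem : ∀ (W : Fin n → Ω → Fin k → ℝ), (∀ i ω, W i ω ∈ simplex k) → ∀ ω,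
      (fun j => (1 / n : ℝ) * ∑ i, W i ω j) ∈ simplex k := by
    intro W hW ω
    refine ⟨fun j => mul_nonneg (by positivity) (Finset.sum_nonneg fun i _ => (hW i ω).1 j), ?_⟩
    rw [← Finset.mul_sum, Finset.sum_comm]
    simp only [(fun i => (hW i ω).2 : ∀ i, ∑ j, W i ω j = 1)]
    simp [hnne]
  -- coordinate measurability
  have hYj : ∀ i j, Measurable fun ω => Y i ω j :=
    fun i j => (measurable_pi_apply j).comp (hYmeas i)
  have hXj : ∀ i j, Measurable fun ω => X i ω j :=
    fun i j => (measurable_pi_apply j).comp (hXmeas i)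
  have hfmeas : Measurable f := by
    apply Measurable.sqrt
    exact Finset.measurable_sum _ fun j _ =>
      ((measurable_const.mul (Finset.measurable_sum _ fun i _ => hXj i j)).sub
        measurable_const).pow_const 2
  have hgmeas : Measurable g := by
    apply Measurable.sqrt
    exact Finset.measurable_sum _ fun j _ =>
      ((measurable_const.mul (Finset.measurable_sum _ fun i _ => hYj i j)).sub
        measurable_const).pow_const 2
  -- integrability from boundedness
  have hint : ∀ (h : Ω → ℝ) (C : ℝ), Measurable h → (∀ ω, |h ω| ≤ C) → Integrable h μ :=
    fun h C hm hb => (integrable_const C).mono' hm.aestronglyMeasurable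
      (Filter.Eventually.of_forall fun ω => by simpa [Real.norm_eq_abs] using hb ω)
  have hfB : ∀ ω, |f ω| ≤ Real.sqrt 2 := fun ω => by
    have h0 : (0:ℝ) ≤ f ω := Real.sqrt_nonneg _
    rw [abs_of_nonneg h0]
    exact dL2_le_sqrt_two (hmem X hXval ω) hθ
  have hgB : ∀ ω, |g ω| ≤ Real.sqrt 2 := fun ω => by
    have h0 : (0:ℝ) ≤ g ω := Real.sqrt_nonneg _
    rw [abs_of_nonneg h0]
    exact dL2_le_sqrt_two (hmem Y hYval ω) hθ
  have hfint : Integrable f μ := hint f _ hfmeas hfB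
  have hgint : Integrable g μ := hint g _ hgmeas hgB
  -- Step A: pointwise bound a.e.
  have hA : ∀ᵐ ω ∂μ, f ω ≤ g ω + Real.sqrt 2 * ε := by
    filter_upwards [hcontam] with ω hω
    have htri := dL2_triangle (fun j => (1 / n : ℝ) * ∑ i, X i ω j)
      (fun j => (1 / n : ℝ) * ∑ i, Y i ω j) θ
    have h1 : dL2 (fun j => (1 / n : ℝ) * ∑ i, X i ω j)
        (fun j => (1 / n : ℝ) * ∑ i, Y i ω j) ≤ Real.sqrt 2 * ε := by
      have hpi : (fun j => (1 / n : ℝ) * ∑ i, X i ω j) -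
          (fun j => (1 / n : ℝ) * ∑ i, Y i ω j) = ∑ i, (1 / n : ℝ) • (X i ω - Y i ω) := by
        funext j
        simp only [Pi.sub_apply, Finset.sum_apply, Pi.smul_apply, smul_eq_mul]
        rw [← Finset.mul_sum, Finset.sum_sub_distrib, mul_sub]
      have hdecomp : (WithLp.equiv 2 (Fin k → ℝ)).symm (fun j => (1 / n : ℝ) * ∑ i, X i ω j) -
          (WithLp.equiv 2 (Fin k → ℝ)).symm (fun j => (1 / n : ℝ) * ∑ i, Y i ω j) =
          ∑ i, (1 / n : ℝ) • ((WithLp.equiv 2 (Fin k → ℝ)).symm (X i ω) -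
            (WithLp.equiv 2 (Fin k → ℝ)).symm (Y i ω)) := by
        rw [show ∀ a b : Fin k → ℝ, (WithLp.equiv 2 (Fin k → ℝ)).symm a - (WithLp.equiv 2 (Fin k → ℝ)).symm b = (WithLp.equiv 2 (Fin k → ℝ)).symm (a - b) from fun _ _ => rfl, hpi]
        calc (WithLp.equiv 2 (Fin k → ℝ)).symm (∑ i, (1 / n : ℝ) • (X i ω - Y i ω))
            = ∑ i, (WithLp.equiv 2 (Fin k → ℝ)).symm ((1 / n : ℝ) • (X i ω - Y i ω)) :=
              map_sum ((WithLp.linearEquiv 2 ℝ (Fin k → ℝ)).symm)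
                (fun i => (1 / n : ℝ) • (X i ω - Y i ω)) Finset.univ
          _ = ∑ i, (1 / n : ℝ) • ((WithLp.equiv 2 (Fin k → ℝ)).symm (X i ω) -
                (WithLp.equiv 2 (Fin k → ℝ)).symm (Y i ω)) := by
              refine Finset.sum_congr rfl fun i _ => ?_
              rfl
      have h2 : ∑ i, dL2 (X i ω) (Y i ω) ≤ (ε * n) * Real.sqrt 2 := by
        have hterm : ∀ i, dL2 (X i ω) (Y i ω) ≤
            if X i ω = Y i ω then 0 else Real.sqrt 2 := by
          intro i
          by_cases h : X i ω = Y i ω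
          · simp [h, dL2]
          · simp only [h, if_false]
            exact dL2_le_sqrt_two (hXval i ω) (hYval i ω)
        calc ∑ i, dL2 (X i ω) (Y i ω) ≤ ∑ i, if X i ω = Y i ω then 0 else Real.sqrt 2 :=
              Finset.sum_le_sum fun i _ => hterm i
          _ = ((Finset.univ.filter fun i => ¬ X i ω = Y i ω).card : ℝ) * Real.sqrt 2 := by
              rw [Finset.sum_ite, Finset.sum_const_zero, Finset.sum_const, zero_add,
                nsmul_eq_mul]
          _ ≤ (ε * n) * Real.sqrt 2 := by
              refine mul_le_mul_of_nonneg_right ?_ (Real.sqrt_nonneg _)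
              simpa [ne_eq] using hω
      calc dL2 (fun j => (1 / n : ℝ) * ∑ i, X i ω j) (fun j => (1 / n : ℝ) * ∑ i, Y i ω j)
          = ‖∑ i, (1 / n : ℝ) • ((WithLp.equiv 2 (Fin k → ℝ)).symm (X i ω) -
              (WithLp.equiv 2 (Fin k → ℝ)).symm (Y i ω))‖ := by
            rw [dL2_eq_norm, hdecomp]
        _ ≤ ∑ i, ‖(1 / n : ℝ) • ((WithLp.equiv 2 (Fin k → ℝ)).symm (X i ω) -
              (WithLp.equiv 2 (Fin k → ℝ)).symm (Y i ω))‖ := norm_sum_le _ _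
        _ = ∑ i, (1 / n : ℝ) * dL2 (X i ω) (Y i ω) := by
            refine Finset.sum_congr rfl fun i _ => ?_
            rw [norm_smul, Real.norm_eq_abs,
              abs_of_nonneg (by positivity : (0:ℝ) ≤ 1 / (n:ℝ)), dL2_eq_norm]
        _ = (1 / n : ℝ) * ∑ i, dL2 (X i ω) (Y i ω) := by rw [← Finset.mul_sum]
        _ ≤ (1 / n : ℝ) * ((ε * n) * Real.sqrt 2) :=
            mul_le_mul_of_nonneg_left h2 (by positivity)
        _ = Real.sqrt 2 * ε := by field_simp
    have hfω : f ω = dL2 (fun j => (1 / n : ℝ) * ∑ i, X i ω j) θ := rfl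
    have hgω : g ω = dL2 (fun j => (1 / n : ℝ) * ∑ i, Y i ω j) θ := rfl
    rw [hfω, hgω]
    linarith
  -- Step B: second moment bound
  have hB : ∫ ω, g ω ∂μ ≤ Real.sqrt (1 / n) := by
    set Z : Fin n → Fin k → Ω → ℝ := fun i j ω => Y i ω j - θ j with hZ
    have hZmeas : ∀ i j, Measurable (Z i j) := fun i j => (hYj i j).sub measurable_const
    have hZbd : ∀ i j ω, |Z i j ω| ≤ 1 := fun i j ω => by
      have h1 := (hYval i ω).1 j
      have h2 := simplex_le_one (hYval i ω) j
      have h3 := hθ.1 j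
      have h4 := simplex_le_one hθ j
      rw [abs_le]
      constructor <;> simp only [Z] <;> linarith
    have hZint : ∀ i j, Integrable (Z i j) μ := fun i j => hint _ 1 (hZmeas i j) (hZbd i j)
    have hZZint : ∀ i i' j, Integrable (fun ω => Z i j ω * Z i' j ω) μ := fun i i' j =>
      hint _ 1 ((hZmeas i j).mul (hZmeas i' j)) (fun ω => by
        rw [abs_mul]
        exact mul_le_one₀ (hZbd i j ω) (abs_nonneg _) (hZbd i' j ω))
    have hYint : ∀ i j, Integrable (fun ω => Y i ω j) μ := fun i j =>
      hint _ 1 (hYj i j) (fun ω => abs_le.2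
        ⟨by linarith [(hYval i ω).1 j], simplex_le_one (hYval i ω) j⟩)
    have hZzero : ∀ i j, ∫ ω, Z i j ω ∂μ = 0 := fun i j => by
      simp only [Z]
      rw [integral_sub (hYint i j) (integrable_const _), hθmean i j, integral_const]
      simp
    have hcross : ∀ i i', i ≠ i' → ∀ j, ∫ ω, Z i j ω * Z i' j ω ∂μ = 0 := by
      intro i i' hne j
      have hφ : Measurable (fun v : Fin k → ℝ => v j - θ j) :=
        (measurable_pi_apply j).sub measurable_const
      have hind : IndepFun (Z i j) (Z i' j) μ := (hYindep.indepFun hne).comp hφ hφ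
      have hmul := IndepFun.integral_fun_mul_eq_mul_integral hind (hZint i j).aestronglyMeasurable (hZint i' j).aestronglyMeasurable
      simpa [Pi.mul_apply, hZzero i j] using hmul
    -- diagonal terms
    have hY2int : ∀ i j, Integrable (fun ω => Y i ω j ^ 2) μ := fun i j =>
      hint _ 1 ((hYj i j).pow_const 2) (fun ω => by
        rw [abs_of_nonneg (sq_nonneg _)]
        nlinarith [(hYval i ω).1 j, simplex_le_one (hYval i ω) j])
    have hdiagj : ∀ i j, ∫ ω, Z i j ω * Z i j ω ∂μ = (∫ ω, Y i ω j ^ 2 ∂μ) - θ j ^ 2 := by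
      intro i j
      have hexp : ∀ ω, Z i j ω * Z i j ω =
          Y i ω j ^ 2 - (2 * θ j) * Y i ω j + θ j ^ 2 := fun ω => by
        simp only [Z]; ring
      simp only [hexp]
      have h1 : Integrable (fun ω => Y i ω j ^ 2 - 2 * θ j * Y i ω j) μ :=
        (hY2int i j).sub ((hYint i j).const_mul _)
      rw [integral_add h1 (integrable_const _),
        integral_sub (hY2int i j) ((hYint i j).const_mul _), integral_const_mul,
        hθmean i j, integral_const]
      simp [measure_univ]
      ring
    have hdiag : ∀ i, ∑ j, ∫ ω, Z i j ω * Z i j ω ∂μ ≤ 1 := by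
      intro i
      have hpt : ∀ ω, ∑ j, Y i ω j ^ 2 ≤ 1 := fun ω => by
        calc ∑ j, Y i ω j ^ 2 ≤ ∑ j, Y i ω j := Finset.sum_le_sum fun j _ => by
              nlinarith [(hYval i ω).1 j, simplex_le_one (hYval i ω) j]
          _ = 1 := (hYval i ω).2
      have hItot : ∑ j, ∫ ω, Y i ω j ^ 2 ∂μ ≤ 1 := by
        rw [← integral_finset_sum _ (fun j _ => hY2int i j)]
        calc ∫ ω, ∑ j, Y i ω j ^ 2 ∂μ ≤ ∫ (_ : Ω), (1:ℝ) ∂μ :=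
              integral_mono (integrable_finset_sum _ fun j _ => hY2int i j)
                (integrable_const _) hpt
          _ = 1 := by simp
      have hθsq : (0:ℝ) ≤ ∑ j, θ j ^ 2 := Finset.sum_nonneg fun j _ => sq_nonneg _
      calc ∑ j, ∫ ω, Z i j ω * Z i j ω ∂μ
          = (∑ j, ∫ ω, Y i ω j ^ 2 ∂μ) - ∑ j, θ j ^ 2 := by
            rw [← Finset.sum_sub_distrib]
            exact Finset.sum_congr rfl fun j _ => hdiagj i j
        _ ≤ 1 - 0 := sub_le_sub hItot hθsq
        _ = 1 := by ring
    -- second moment identity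
    have hgsq : ∀ ω, g ω ^ 2 = (1 / (n:ℝ)) ^ 2 * ∑ i, ∑ i', ∑ j, Z i j ω * Z i' j ω := by
      intro ω
      have h0 : (0:ℝ) ≤ ∑ j, ((1 / n : ℝ) * ∑ i, Y i ω j - θ j) ^ 2 :=
        Finset.sum_nonneg fun j _ => sq_nonneg _
      have hgval : g ω ^ 2 = ∑ j, ((1 / n : ℝ) * ∑ i, Y i ω j - θ j) ^ 2 := Real.sq_sqrt h0
      have hcoord : ∀ j, (1 / n : ℝ) * ∑ i, Y i ω j - θ j = (1 / n : ℝ) * ∑ i, Z i j ω := by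
        intro j
        simp only [Z]
        rw [Finset.sum_sub_distrib, mul_sub, Finset.sum_const, Finset.card_univ,
          Fintype.card_fin, nsmul_eq_mul]
        field_simp
      rw [hgval]
      calc ∑ j, ((1 / n : ℝ) * ∑ i, Y i ω j - θ j) ^ 2
          = ∑ j, (1 / (n:ℝ)) ^ 2 * ((∑ i, Z i j ω) * (∑ i', Z i' j ω)) := by
            refine Finset.sum_congr rfl fun j _ => ?_
            rw [hcoord j]; ring
        _ = (1 / (n:ℝ)) ^ 2 * ∑ j, ∑ i, ∑ i', Z i j ω * Z i' j ω := by
            rw [← Finset.mul_sum]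
            congr 1
            exact Finset.sum_congr rfl fun j _ => Finset.sum_mul_sum _ _ _ _
        _ = (1 / (n:ℝ)) ^ 2 * ∑ i, ∑ i', ∑ j, Z i j ω * Z i' j ω := by
            congr 1
            rw [Finset.sum_comm]
            exact Finset.sum_congr rfl fun i _ => Finset.sum_comm
    have hI : ∫ ω, g ω ^ 2 ∂μ =
        (1 / (n:ℝ)) ^ 2 * ∑ i, ∑ i', ∑ j, ∫ ω, Z i j ω * Z i' j ω ∂μ := by
      simp only [hgsq]
      rw [integral_const_mul]
      congr 1
      rw [integral_finset_sum _ (fun i _ =>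
        integrable_finset_sum _ fun i' _ => integrable_finset_sum _ fun j _ => hZZint i i' j)]
      refine Finset.sum_congr rfl fun i _ => ?_
      rw [integral_finset_sum _ (fun i' _ => integrable_finset_sum _ fun j _ => hZZint i i' j)]
      refine Finset.sum_congr rfl fun i' _ => ?_
      rw [integral_finset_sum _ fun j _ => hZZint i i' j]
    have hsum_le : ∑ i, ∑ i', ∑ j, ∫ ω, Z i j ω * Z i' j ω ∂μ ≤ (n:ℝ) := by
      calc ∑ i, ∑ i', ∑ j, ∫ ω, Z i j ω * Z i' j ω ∂μ
          = ∑ i, ∑ j, ∫ ω, Z i j ω * Z i j ω ∂μ := by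
            refine Finset.sum_congr rfl fun i _ => ?_
            rw [Finset.sum_eq_single i]
            · intro i' _ hne
              exact Finset.sum_eq_zero fun j _ => hcross i i' (Ne.symm hne) j
            · intro h; exact absurd (Finset.mem_univ i) h
        _ ≤ ∑ _i : Fin n, (1:ℝ) := Finset.sum_le_sum fun i _ => hdiag i
        _ = (n:ℝ) := by simp
    have hg2 : ∫ ω, g ω ^ 2 ∂μ ≤ 1 / (n:ℝ) := by
      rw [hI]
      calc (1 / (n:ℝ)) ^ 2 * ∑ i, ∑ i', ∑ j, ∫ ω, Z i j ω * Z i' j ω ∂μ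
          ≤ (1 / (n:ℝ)) ^ 2 * n := mul_le_mul_of_nonneg_left hsum_le (by positivity)
        _ = 1 / (n:ℝ) := by field_simp
    have hgnn : 0 ≤ ∫ ω, g ω ∂μ := integral_nonneg fun ω => Real.sqrt_nonneg _
    have hmemp : MemLp g 2 μ := MemLp.of_bound hgmeas.aestronglyMeasurable (Real.sqrt 2)
      (Filter.Eventually.of_forall fun ω => by simpa [Real.norm_eq_abs] using hgB ω)
    have hvar := variance_nonneg g μ
    rw [variance_eq_sub hmemp] at hvar
    have hpow : μ[g ^ 2] = ∫ ω, g ω ^ 2 ∂μ := by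
      refine integral_congr_ae (Filter.Eventually.of_forall fun ω => ?_)
      simp [Pi.pow_apply]
    have hsq : (∫ ω, g ω ∂μ) ^ 2 ≤ ∫ ω, g ω ^ 2 ∂μ := by
      rw [hpow] at hvar
      have : μ[g] = ∫ ω, g ω ∂μ := rfl
      linarith [hvar]
    exact (Real.le_sqrt hgnn (by positivity)).2 (le_trans hsq hg2)
  have step1 : ∫ ω, f ω ∂μ ≤ ∫ ω, (g ω + Real.sqrt 2 * ε) ∂μ :=
    integral_mono_ae hfint (hgint.add (integrable_const _)) hA
  have step2 : ∫ ω, (g ω + Real.sqrt 2 * ε) ∂μ = (∫ ω, g ω ∂μ) + Real.sqrt 2 * ε := by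
    rw [integral_add hgint (integrable_const _), integral_const]
    simp
  calc ∫ ω, f ω ∂μ ≤ (∫ ω, g ω ∂μ) + Real.sqrt 2 * ε := by rw [← step2]; exact step1
    _ ≤ Real.sqrt (1 / n) + Real.sqrt 2 * ε := by linarith
end
end

section
/- In the adversarial contamination setup with θ* ∈ Δ_s^{k-1} (1 ≤ s ≤ k), for every tolerance level δ ∈ (0,1), with probability at least 1 − δ one has d_TV(X̄_n, θ*) ≤ (s/n)^{1/2} + 2ε + (2 log(1/δ)/n)^{1/2}. -/
open MeasureTheory ProbabilityTheory

noncomputable section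

namespace SampleMeanTVAux
open Real MeasureTheory ProbabilityTheory


lemma D_pos {q : ℝ} (hq0 : 0 ≤ q) (hq1 : q ≤ 1) (t : ℝ) : 0 < 1 - q + q * exp t := by
  nlinarith [exp_pos t, mul_nonneg hq0 (exp_pos t).le]

lemma hoeffding_fn_le {q : ℝ} (hq0 : 0 ≤ q) (hq1 : q ≤ 1) (t : ℝ) :
    -(q * t) + Real.log (1 - q + q * exp t) ≤ t ^ 2 / 8 := by
  set f : ℝ → ℝ := fun t => -(q * t) + Real.log (1 - q + q * exp t) with hf
  set f' : ℝ → ℝ := fun t => -q + q * exp t / (1 - q + q * exp t) with hf'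
  set g : ℝ → ℝ := fun t => t ^ 2 / 8 - f t with hg
  set g' : ℝ → ℝ := fun t => t / 4 - f' t with hg'
  have hD : ∀ t : ℝ, 0 < 1 - q + q * exp t := D_pos hq0 hq1
  have hDer : ∀ t : ℝ, HasDerivAt f (f' t) t := by
    intro t
    have h1 : HasDerivAt (fun t : ℝ => 1 - q + q * exp t) (q * exp t) t :=
      ((Real.hasDerivAt_exp t).const_mul q).const_add (1 - q)
    have h2 := h1.log (hD t).ne'
    have h3 : HasDerivAt (fun t : ℝ => -(q * t)) (-q) t := by
      exact (((hasDerivAt_id t).const_mul q).neg).congr_deriv (by ring)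
    exact h3.add h2
  have hDer2 : ∀ t : ℝ, HasDerivAt f' (q * exp t * (1 - q) / (1 - q + q * exp t) ^ 2) t := by
    intro t
    have h1 : HasDerivAt (fun t : ℝ => 1 - q + q * exp t) (q * exp t) t :=
      ((Real.hasDerivAt_exp t).const_mul q).const_add (1 - q)
    have h2 : HasDerivAt (fun t : ℝ => q * exp t) (q * exp t) t :=
      (Real.hasDerivAt_exp t).const_mul q
    have h3 := h2.div h1 (hD t).ne'
    have h4 := (hasDerivAt_const t (-q)).add h3
    refine h4.congr_deriv ?_
    field_simp
    ring
  have hgDer : ∀ t : ℝ, HasDerivAt g (g' t) t := by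
    intro t
    have : HasDerivAt (fun t : ℝ => t ^ 2 / 8) (t / 4) t := by
      have := (hasDerivAt_pow 2 t).div_const 8
      refine this.congr_deriv ?_; ring
    exact this.sub (hDer t)
  have hg'Der : ∀ t : ℝ, HasDerivAt g' (1 / 4 - q * exp t * (1 - q) / (1 - q + q * exp t) ^ 2) t := by
    intro t
    have : HasDerivAt (fun t : ℝ => t / 4) (1 / 4) t := by
      simpa using (hasDerivAt_id t).div_const 4
    exact this.sub (hDer2 t)
  have hg'' : ∀ t : ℝ, 0 ≤ 1 / 4 - q * exp t * (1 - q) / (1 - q + q * exp t) ^ 2 := by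
    intro t
    have h1 : q * exp t * (1 - q) / (1 - q + q * exp t) ^ 2 ≤ 1 / 4 := by
      rw [div_le_iff₀ (pow_pos (hD t) 2)]
      nlinarith [sq_nonneg ((1 - q) - q * exp t)]
    linarith
  have hg'mono : Monotone g' := monotone_of_hasDerivAt_nonneg hg'Der hg''
  have hg'0 : g' 0 = 0 := by
    simp [hg', hf']
  have hgmin : ∀ t : ℝ, g 0 ≤ g t := by
    intro t
    rcases le_total 0 t with h | h
    · have : MonotoneOn g (Set.Ici 0) := by
        apply monotoneOn_of_hasDerivWithinAt_nonneg (convex_Ici 0)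
          (fun x _ => (hgDer x).continuousAt.continuousWithinAt)
          (fun x hx => (hgDer x).hasDerivWithinAt)
        intro x hx
        rw [interior_Ici] at hx
        have := hg'mono (le_of_lt hx)
        rw [hg'0] at this
        exact this
      exact this Set.self_mem_Ici h h
    · have : AntitoneOn g (Set.Iic 0) := by
        apply antitoneOn_of_hasDerivWithinAt_nonpos (convex_Iic 0)
          (fun x _ => (hgDer x).continuousAt.continuousWithinAt)
          (fun x hx => (hgDer x).hasDerivWithinAt)
        intro x hx
        rw [interior_Iic] at hx
        have := hg'mono (le_of_lt hx)
        rw [hg'0] at this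
        exact this
      exact this h Set.self_mem_Iic h
  have h0 : g 0 = 0 := by simp [hg, hf]
  have := hgmin t
  rw [h0] at this
  simp only [hg, hf] at this
  linarith

lemma mgf_le_hoeffding {Ω : Type} [MeasurableSpace Ω] {μ : Measure Ω} [IsProbabilityMeasure μ]
    {Z : Ω → ℝ} (hmeas : Measurable Z) {q : ℝ} (hq0 : 0 ≤ q) (hq1 : q ≤ 1)
    (hbdd : ∀ ω, Z ω ∈ Set.Icc (-q) (1 - q)) (hmean : ∫ ω, Z ω ∂μ = 0) (t : ℝ) :
    mgf Z μ t ≤ exp (t ^ 2 / 8) := by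
  have hZint : Integrable Z μ := by
    refine (integrable_const (1 : ℝ)).mono' hmeas.aestronglyMeasurable ?_
    filter_upwards with ω
    have h := hbdd ω
    rw [Real.norm_eq_abs, abs_le]
    constructor <;> [linarith [h.1]; linarith [h.2]]
  -- pointwise convexity bound
  have hptw : ∀ ω, exp (t * Z ω) ≤
      (1 - q - Z ω) * exp (t * (-q)) + (Z ω + q) * exp (t * (1 - q)) := by
    intro ω
    obtain ⟨h1, h2⟩ := hbdd ω
    have hc := convexOn_exp.2 (Set.mem_univ (t * (-q))) (Set.mem_univ (t * (1 - q)))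
      (by linarith : (0:ℝ) ≤ 1 - q - Z ω) (by linarith : (0:ℝ) ≤ Z ω + q) (by ring)
    simp only [smul_eq_mul] at hc
    have : (1 - q - Z ω) * (t * (-q)) + (Z ω + q) * (t * (1 - q)) = t * Z ω := by ring
    rwa [this] at hc
  have hint1 : Integrable (fun ω => exp (t * Z ω)) μ := by
    refine (integrable_const (exp |t|)).mono' (hmeas.const_mul t).exp.aestronglyMeasurable ?_
    filter_upwards with ω
    obtain ⟨h1, h2⟩ := hbdd ω
    rw [Real.norm_eq_abs, abs_exp, exp_le_exp]
    calc t * Z ω ≤ |t * Z ω| := le_abs_self _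
      _ = |t| * |Z ω| := abs_mul t (Z ω)
      _ ≤ |t| * 1 := by
          refine mul_le_mul_of_nonneg_left ?_ (abs_nonneg t)
          rw [abs_le]; constructor <;> linarith
      _ = |t| := mul_one _
  have hint2 : Integrable (fun ω => (1 - q - Z ω) * exp (t * (-q)) + (Z ω + q) * exp (t * (1 - q))) μ := by
    apply Integrable.add
    · exact (((integrable_const (1 - q)).sub hZint).mul_const _)
    · exact ((hZint.add (integrable_const q)).mul_const _)
  have e1 : Integrable (fun a => (1 - q - Z a) * exp (t * (-q))) μ := by
    apply Integrable.mul_const ((integrable_const (1 - q)).sub hZint)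
  have e2 : Integrable (fun a => (Z a + q) * exp (t * (1 - q))) μ := by
    apply Integrable.mul_const (hZint.add (integrable_const q))
  have hInt : mgf Z μ t ≤ (1 - q) * exp (t * (-q)) + q * exp (t * (1 - q)) := by
    have := integral_mono hint1 hint2 hptw
    rw [mgf]
    refine this.trans_eq ?_
    rw [integral_add e1 e2, integral_mul_const, integral_mul_const,
      integral_sub (integrable_const _) hZint,
      integral_add hZint (integrable_const _), hmean, integral_const, integral_const]
    simp
  refine hInt.trans ?_
  have hD : (0:ℝ) < 1 - q + q * exp t := by
    nlinarith [exp_pos t, mul_nonneg hq0 (exp_pos t).le]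
  have key : (1 - q) * exp (t * (-q)) + q * exp (t * (1 - q)) =
      exp (-(q * t) + Real.log (1 - q + q * exp t)) := by
    rw [exp_add, exp_log hD]
    rw [show t * (1 - q) = t + t * (-q) by ring, exp_add,
      show -(q*t) = t * (-q) by ring]
    ring
  rw [key]
  exact exp_le_exp.mpr (hoeffding_fn_le hq0 hq1 t)

lemma hoeffding_tail {Ω : Type} [MeasurableSpace Ω] {μ : Measure Ω} [IsProbabilityMeasure μ]
    {n : ℕ} {Z : Fin n → Ω → ℝ} (hindep : iIndepFun Z μ)
    (hmeas : ∀ i, Measurable (Z i)) {q : Fin n → ℝ} (hq0 : ∀ i, 0 ≤ q i) (hq1 : ∀ i, q i ≤ 1)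
    (hbdd : ∀ i ω, Z i ω ∈ Set.Icc (-(q i)) (1 - q i)) (hmean : ∀ i, ∫ ω, Z i ω ∂μ = 0)
    {a : ℝ} (ha : 0 ≤ a) :
    (μ {ω | (n : ℝ) * a ≤ ∑ i, Z i ω}).toReal ≤ exp (-(2 * n * a ^ 2)) := by
  set t : ℝ := 4 * a with ht
  have ht0 : 0 ≤ t := by positivity
  have hint : ∀ i, Integrable (fun ω => exp (t * Z i ω)) μ := by
    intro i
    refine (integrable_const (exp |t|)).mono' ((hmeas i).const_mul t).exp.aestronglyMeasurable ?_
    filter_upwards with ω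
    obtain ⟨h1, h2⟩ := hbdd i ω
    have hq0i := hq0 i; have hq1i := hq1 i
    rw [Real.norm_eq_abs, abs_exp, exp_le_exp]
    calc t * Z i ω ≤ |t * Z i ω| := le_abs_self _
      _ = |t| * |Z i ω| := abs_mul _ _
      _ ≤ |t| * 1 := by
          refine mul_le_mul_of_nonneg_left ?_ (abs_nonneg t)
          rw [abs_le]; constructor <;> linarith
      _ = |t| := mul_one _
  have hintsum : Integrable (fun ω => exp (t * (∑ i, Z i) ω)) μ :=
    hindep.integrable_exp_mul_sum hmeas (fun i _ => hint i)
  have hchern := measure_ge_le_exp_mul_mgf (X := ∑ i, Z i) (μ := μ) ((n : ℝ) * a) ht0 hintsum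
  have hmgf : mgf (∑ i, Z i) μ t ≤ exp ((n : ℝ) * t ^ 2 / 8) := by
    rw [hindep.mgf_sum hmeas Finset.univ]
    calc ∏ i, mgf (Z i) μ t ≤ ∏ _i : Fin n, exp (t ^ 2 / 8) := by
          refine Finset.prod_le_prod (fun i _ => mgf_nonneg) (fun i _ => ?_)
          exact mgf_le_hoeffding (hmeas i) (hq0 i) (hq1 i) (hbdd i) (hmean i) t
      _ = exp ((n : ℝ) * t ^ 2 / 8) := by
          rw [Finset.prod_const, ← Real.exp_nat_mul, Finset.card_univ, Fintype.card_fin]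
          ring_nf
  have : (μ {ω | (n : ℝ) * a ≤ (∑ i, Z i) ω}).toReal ≤ exp (-(2 * n * a ^ 2)) := by
    refine hchern.trans ?_
    calc exp (-t * ((n : ℝ) * a)) * mgf (∑ i, Z i) μ t
        ≤ exp (-t * ((n : ℝ) * a)) * exp ((n : ℝ) * t ^ 2 / 8) := by
          exact mul_le_mul_of_nonneg_left hmgf (exp_pos _).le
      _ = exp (-(2 * n * a ^ 2)) := by
          rw [← exp_add]; congr 1; rw [ht]; ring
  simpa only [Finset.sum_apply] using this

end SampleMeanTVAux

open SampleMeanTVAux Real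
open scoped ENNReal NNReal

/-- In the adversarial contamination setup with `s`-sparse mean, with probability at
least `1 - δ`, `d_TV(X̄_n, θ*) ≤ (s/n)^{1/2} + 2ε + (2·log(1/δ)/n)^{1/2}`. -/
theorem sample_mean_TV_confidence
    {Ω : Type} [MeasurableSpace Ω] (μ : Measure Ω) [IsProbabilityMeasure μ]
    (k s n : ℕ) (hk : 1 ≤ k) (hs1 : 1 ≤ s) (hsk : s ≤ k) (hn : 1 ≤ n)
    (ε : ℝ) (hε0 : 0 ≤ ε) (hε1 : ε ≤ 1)
    (Y X : Fin n → Ω → Fin k → ℝ)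
    (hYmeas : ∀ i, Measurable (Y i)) (hXmeas : ∀ i, Measurable (X i))
    (hYindep : iIndepFun Y μ)
    (hYid : ∀ i j, IdentDistrib (Y i) (Y j) μ μ)
    (hYval : ∀ i ω, Y i ω ∈ simplex k)
    (hXval : ∀ i ω, X i ω ∈ simplex k)
    (θ : Fin k → ℝ) (hθ : θ ∈ simplex k) (hθsparse : sparse s θ)
    (hθmean : ∀ i j, ∫ ω, Y i ω j ∂μ = θ j)
    (hcontam : ∀ᵐ ω ∂μ,
      ((Finset.univ.filter fun i => X i ω ≠ Y i ω).card : ℝ) ≤ ε * n)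
    (δ : ℝ) (hδ0 : 0 < δ) (hδ1 : δ < 1) :
    ENNReal.ofReal (1 - δ) ≤
      μ {ω | dTV (fun j => (1 / n : ℝ) * ∑ i, X i ω j) θ ≤
        Real.sqrt (s / n) + 2 * ε + Real.sqrt (2 * Real.log (1 / δ) / n)} := by
  classical
  have hnpos : (0:ℝ) < n := by exact_mod_cast hn
  -- basic bounds on Y coordinates
  have hYbd : ∀ i ω (j : Fin k), 0 ≤ Y i ω j ∧ Y i ω j ≤ 1 := by
    intro i ω j
    obtain ⟨h1, h2⟩ := hYval i ω
    refine ⟨h1 j, ?_⟩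
    calc Y i ω j ≤ ∑ j', Y i ω j' :=
          Finset.single_le_sum (fun j' _ => h1 j') (Finset.mem_univ j)
      _ = 1 := h2
  have hYcoordmeas : ∀ i (j : Fin k), Measurable (fun ω => Y i ω j) :=
    fun i j => (measurable_pi_apply j).comp (hYmeas i)
  have hYint : ∀ i (j : Fin k), Integrable (fun ω => Y i ω j) μ := by
    intro i j
    refine (integrable_const (1:ℝ)).mono' (hYcoordmeas i j).aestronglyMeasurable ?_
    filter_upwards with ω
    rw [Real.norm_eq_abs, abs_le]
    exact ⟨by linarith [(hYbd i ω j).1], by simpa using (hYbd i ω j).2⟩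
  -- support of θ
  set S : Finset (Fin k) := Finset.univ.filter (fun j => θ j ≠ 0) with hS
  have hScard : S.card ≤ s := hθsparse
  have hθ0 : ∀ j ∉ S, θ j = 0 := by
    intro j hj
    by_contra h
    exact hj (Finset.mem_filter.mpr ⟨Finset.mem_univ j, h⟩)
  -- a.e. Y vanishes off the support
  have hzero : ∀ᵐ ω ∂μ, ∀ i (j : Fin k), θ j = 0 → Y i ω j = 0 := by
    rw [ae_all_iff]
    intro i
    rw [ae_all_iff]
    intro j
    by_cases hθj : θ j = 0
    · have h0 : ∫ ω, Y i ω j ∂μ = 0 := by rw [hθmean i j, hθj]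
      have := (integral_eq_zero_iff_of_nonneg (fun ω => (hYbd i ω j).1) (hYint i j)).mp h0
      filter_upwards [this] with ω hω _
      exact hω
    · filter_upwards with ω hω
      exact absurd hω hθj
  -- parameters
  set L : ℝ := Real.log (1 / δ) with hL
  have hLpos : 0 < L := Real.log_pos (by rw [lt_div_iff₀ hδ0]; linarith)
  set a : ℝ := Real.sqrt (s / n) + Real.sqrt (2 * L / n) with ha
  have ha0 : 0 ≤ a := add_nonneg (Real.sqrt_nonneg _) (Real.sqrt_nonneg _)
  -- the centered sums for subsets of the support
  set Z : Finset (Fin k) → Fin n → Ω → ℝ :=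
    fun T i ω => ∑ j ∈ T, (Y i ω j - θ j) with hZ
  have hZmeas : ∀ T i, Measurable (Z T i) := by
    intro T i
    exact Finset.measurable_sum T (fun j _ => (hYcoordmeas i j).sub measurable_const)
  -- bad events
  set Bad : Finset (Fin k) → Set Ω := fun T => {ω | (n : ℝ) * a ≤ ∑ i, Z T i ω} with hBad
  have hBadmeas : ∀ T, MeasurableSet (Bad T) := by
    intro T
    exact measurableSet_le measurable_const (Finset.measurable_sum _ (fun i _ => hZmeas T i))
  set B : Set Ω := ⋃ T ∈ S.powerset, Bad T with hB
  have hBmeas : MeasurableSet B :=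
    MeasurableSet.biUnion (Finset.countable_toSet _) (fun T _ => hBadmeas T)
  -- each bad event has small probability
  have hq0' : ∀ (T : Finset (Fin k)), (0:ℝ) ≤ ∑ j ∈ T, θ j :=
    fun T => Finset.sum_nonneg (fun j _ => hθ.1 j)
  have hq1' : ∀ (T : Finset (Fin k)), ∑ j ∈ T, θ j ≤ 1 := by
    intro T
    calc ∑ j ∈ T, θ j ≤ ∑ j, θ j :=
          Finset.sum_le_sum_of_subset_of_nonneg (Finset.subset_univ T) (fun j _ _ => hθ.1 j)
      _ = 1 := hθ.2
  have hBadprob : ∀ T, (μ (Bad T)).toReal ≤ exp (-(2 * n * a ^ 2)) := by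
    intro T
    have hindep : iIndepFun (Z T) μ := by
      have := hYindep.comp (fun _ (v : Fin k → ℝ) => ∑ j ∈ T, (v j - θ j))
        (fun _ => Finset.measurable_sum T (fun j _ => (measurable_pi_apply j).sub measurable_const))
      exact this
    have hbdd : ∀ i ω, Z T i ω ∈ Set.Icc (-(∑ j ∈ T, θ j)) (1 - ∑ j ∈ T, θ j) := by
      intro i ω
      have h0 : (0:ℝ) ≤ ∑ j ∈ T, Y i ω j := Finset.sum_nonneg (fun j _ => (hYbd i ω j).1)
      have h1 : ∑ j ∈ T, Y i ω j ≤ 1 := by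
        calc ∑ j ∈ T, Y i ω j ≤ ∑ j, Y i ω j :=
              Finset.sum_le_sum_of_subset_of_nonneg (Finset.subset_univ T)
                (fun j _ _ => (hYbd i ω j).1)
          _ = 1 := (hYval i ω).2
      have hsplit : Z T i ω = (∑ j ∈ T, Y i ω j) - ∑ j ∈ T, θ j := by
        simp only [hZ, Finset.sum_sub_distrib]
      constructor <;> rw [hsplit] <;> [linarith; linarith]
    have hmean : ∀ i, ∫ ω, Z T i ω ∂μ = 0 := by
      intro i
      have hint : ∀ j ∈ T, Integrable (fun ω => Y i ω j - θ j) μ :=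
        fun j _ => (hYint i j).sub (integrable_const (θ j))
      have heq : ∫ ω, Z T i ω ∂μ = ∑ j ∈ T, ∫ ω, (Y i ω j - θ j) ∂μ := by
        simp only [hZ]
        exact integral_finset_sum T hint
      rw [heq]
      refine Finset.sum_eq_zero (fun j _ => ?_)
      rw [integral_sub (hYint i j) (integrable_const (θ j)), hθmean i j, integral_const]
      simp
    exact hoeffding_tail hindep (hZmeas T) (fun _ => hq0' T) (fun _ => hq1' T) hbdd hmean ha0
  -- total bad probability
  have hBprob : μ B ≤ ENNReal.ofReal δ := by
    have h1 : μ B ≤ ∑ T ∈ S.powerset, μ (Bad T) := measure_biUnion_finset_le _ _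
    have h2 : ∀ T ∈ S.powerset, μ (Bad T) ≤ ENNReal.ofReal (exp (-(2 * n * a ^ 2))) := by
      intro T _
      exact (ENNReal.le_ofReal_iff_toReal_le (measure_ne_top μ _) (exp_pos _).le).mpr (hBadprob T)
    have h3 : μ B ≤ (S.powerset.card : ℝ≥0∞) * ENNReal.ofReal (exp (-(2 * n * a ^ 2))) := by
      refine h1.trans ?_
      calc ∑ T ∈ S.powerset, μ (Bad T)
          ≤ ∑ _T ∈ S.powerset, ENNReal.ofReal (exp (-(2 * n * a ^ 2))) :=
            Finset.sum_le_sum h2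
        _ = (S.powerset.card : ℝ≥0∞) * ENNReal.ofReal (exp (-(2 * n * a ^ 2))) := by
            rw [Finset.sum_const, nsmul_eq_mul]
    refine h3.trans ?_
    rw [Finset.card_powerset]
    rw [show ((2 ^ S.card : ℕ) : ℝ≥0∞) = ENNReal.ofReal ((2:ℝ) ^ S.card) by
      rw [ENNReal.ofReal_pow (by norm_num)]; norm_num]
    rw [← ENNReal.ofReal_mul (by positivity)]
    refine ENNReal.ofReal_le_ofReal ?_
    -- real arithmetic: 2^|S| * exp(-(2 n a^2)) ≤ δ
    have hsq : (s:ℝ)/n + 2*L/n ≤ a ^ 2 := by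
      rw [ha]
      have h1 : Real.sqrt ((s:ℝ)/n) ^ 2 = (s:ℝ)/n := Real.sq_sqrt (by positivity)
      have h2 : Real.sqrt (2*L/n) ^ 2 = 2*L/n := Real.sq_sqrt (by positivity)
      nlinarith [mul_nonneg (Real.sqrt_nonneg ((s:ℝ)/n)) (Real.sqrt_nonneg (2*L/n))]
    have hexp1 : exp (-(2 * n * a ^ 2)) ≤ exp (-(2*s + 4*L)) := by
      rw [Real.exp_le_exp]
      have heq : 2 * (n:ℝ) * ((s:ℝ)/n + 2*L/n) = 2*s + 4*L := by field_simp; ring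
      have h4 := mul_le_mul_of_nonneg_left hsq (by positivity : (0:ℝ) ≤ 2*n)
      rw [heq] at h4
      linarith
    have hpow : (2:ℝ) ^ S.card ≤ 2 ^ s := by
      exact pow_le_pow_right₀ (by norm_num) hScard
    calc (2:ℝ) ^ S.card * exp (-(2 * n * a ^ 2)) ≤ 2 ^ s * exp (-(2*s + 4*L)) := by
          exact mul_le_mul hpow hexp1 (exp_pos _).le (by positivity)
      _ = (2 * exp (-2)) ^ s * exp (-(4*L)) := by
          rw [show -(2*(s:ℝ) + 4*L) = (s:ℝ)*(-2) + -(4*L) by push_cast; ring, Real.exp_add,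
            Real.exp_nat_mul, mul_pow]
          ring
      _ ≤ 1 ^ s * exp (-(4*L)) := by
          refine mul_le_mul_of_nonneg_right (pow_le_pow_left₀ (by positivity) ?_ s) (exp_pos _).le
          have h5 := Real.add_one_le_exp (2:ℝ)
          have hinv : Real.exp (-2:ℝ) * Real.exp 2 = 1 := by
            rw [← Real.exp_add]; norm_num
          nlinarith [Real.exp_pos (-2:ℝ)]
      _ ≤ δ := by
          rw [one_pow, one_mul, hL, Real.log_div one_ne_zero (ne_of_gt hδ0), Real.log_one]
          rw [show -(4*(0 - Real.log δ)) = (4:ℕ) * Real.log δ by ring, Real.exp_nat_mul,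
            Real.exp_log hδ0]
          have h6 : δ^3 ≤ 1 := pow_le_one₀ hδ0.le (by linarith)
          nlinarith
  -- the good event implies the conclusion
  have hgood : ∀ᵐ ω ∂μ, ω ∈ Bᶜ →
      dTV (fun j => (1 / n : ℝ) * ∑ i, X i ω j) θ ≤
        Real.sqrt (s / n) + 2 * ε + Real.sqrt (2 * Real.log (1 / δ) / n) := by
    filter_upwards [hzero, hcontam] with ω hz hc hBc
    have hT : ∀ T ∈ S.powerset, ∑ i, Z T i ω < (n:ℝ) * a := by
      intro T hTmem
      by_contra h
      push_neg at h
      exact hBc (Set.mem_biUnion hTmem h)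
    set Ybar : Fin k → ℝ := fun j => (1 / n : ℝ) * ∑ i, Y i ω j with hYbar
    set Xbar : Fin k → ℝ := fun j => (1 / n : ℝ) * ∑ i, X i ω j with hXbar
    -- contamination bound
    have hcont : ∑ j, |Xbar j - Ybar j| ≤ 2 * ε := by
      have hdiff : ∀ i, ∑ j, |X i ω j - Y i ω j| ≤
          if X i ω = Y i ω then 0 else 2 := by
        intro i
        by_cases h : X i ω = Y i ω
        · simp [h]
        · simp only [h, if_false]
          calc ∑ j, |X i ω j - Y i ω j| ≤ ∑ j, (X i ω j + Y i ω j) := by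
                refine Finset.sum_le_sum (fun j _ => ?_)
                rw [abs_sub_le_iff]
                constructor
                · linarith [(hXval i ω).1 j, (hYval i ω).1 j,
                    (hYbd i ω j).2]
                · have hX1 : X i ω j ≤ 1 := by
                    calc X i ω j ≤ ∑ j', X i ω j' :=
                          Finset.single_le_sum (fun j' _ => (hXval i ω).1 j') (Finset.mem_univ j)
                      _ = 1 := (hXval i ω).2
                  linarith [(hXval i ω).1 j, (hYval i ω).1 j]
            _ = 2 := by rw [Finset.sum_add_distrib, (hXval i ω).2, (hYval i ω).2]; norm_num
      calc ∑ j, |Xbar j - Ybar j|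
          = ∑ j, |(1/n : ℝ) * ∑ i, (X i ω j - Y i ω j)| := by
            refine Finset.sum_congr rfl (fun j _ => ?_)
            rw [hXbar, hYbar]
            congr 1
            rw [Finset.sum_sub_distrib, mul_sub]
        _ ≤ ∑ j, (1/n : ℝ) * ∑ i, |X i ω j - Y i ω j| := by
            refine Finset.sum_le_sum (fun j _ => ?_)
            rw [abs_mul, abs_of_nonneg (by positivity : (0:ℝ) ≤ (1/n:ℝ))]
            exact mul_le_mul_of_nonneg_left (Finset.abs_sum_le_sum_abs _ _) (by positivity)
        _ = (1/n : ℝ) * ∑ i, ∑ j, |X i ω j - Y i ω j| := by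
            rw [← Finset.mul_sum, Finset.sum_comm]
        _ ≤ (1/n : ℝ) * ∑ i, (if X i ω = Y i ω then (0:ℝ) else 2) := by
            exact mul_le_mul_of_nonneg_left (Finset.sum_le_sum (fun i _ => hdiff i)) (by positivity)
        _ ≤ (1/n : ℝ) * (2 * (ε * n)) := by
            refine mul_le_mul_of_nonneg_left ?_ (by positivity)
            calc ∑ i, (if X i ω = Y i ω then (0:ℝ) else 2)
                = 2 * ((Finset.univ.filter fun i => X i ω ≠ Y i ω).card : ℝ) := by
                  rw [Finset.sum_ite, Finset.sum_const, Finset.sum_const]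
                  simp [Ne]
                  ring
              _ ≤ 2 * (ε * n) := by linarith
        _ = 2 * ε := by field_simp
    -- off-support coordinates of Ybar vanish
    have hYoff : ∀ j ∉ S, Ybar j = 0 := by
      intro j hj
      rw [hYbar]
      have : ∀ i : Fin n, Y i ω j = 0 := fun i => hz i j (hθ0 j hj)
      simp [this]
    -- sum of Ybar over S is 1
    have hYsum : ∑ j ∈ S, Ybar j = 1 := by
      have h1 : ∑ j, Ybar j = 1 := by
        rw [hYbar, ← Finset.mul_sum, Finset.sum_comm]
        simp only [(fun i => (hYval i ω).2 : ∀ i, ∑ j, Y i ω j = 1)]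
        rw [Finset.sum_const, Finset.card_univ, Fintype.card_fin, nsmul_eq_mul]
        field_simp
      rw [← h1]
      refine Finset.sum_subset (Finset.subset_univ S) (fun j _ hj => hYoff j hj)
    have hθsum : ∑ j ∈ S, θ j = 1 := by
      rw [← hθ.2]
      refine Finset.sum_subset (Finset.subset_univ S) (fun j _ hj => hθ0 j hj)
    -- main TV bound for Ybar
    set d : Fin k → ℝ := fun j => Ybar j - θ j with hd
    have hdsum : ∑ j ∈ S, d j = 0 := by
      rw [hd]
      simp only [Finset.sum_sub_distrib, hYsum, hθsum, sub_self]
    set T₀ : Finset (Fin k) := S.filter (fun j => 0 ≤ d j) with hT₀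
    have hTV_Y : dTV Ybar θ = ∑ j ∈ T₀, d j := by
      rw [dTV]
      have hsplit : ∑ j, |Ybar j - θ j| = ∑ j ∈ S, |Ybar j - θ j| := by
        symm
        refine Finset.sum_subset (Finset.subset_univ S) (fun j _ hj => ?_)
        rw [hYoff j hj, hθ0 j hj]
        simp
      rw [hsplit,
        show ∑ j ∈ S, |Ybar j - θ j| = ∑ j ∈ S, |d j| from
          Finset.sum_congr rfl (fun j _ => by simp only [hd])]
      have h2 : ∑ j ∈ S, |d j| = ∑ j ∈ T₀, d j + ∑ j ∈ S.filter (fun j => ¬ 0 ≤ d j), (- d j) := by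
        rw [← Finset.sum_filter_add_sum_filter_not S (fun j => 0 ≤ d j) (fun j => |d j|)]
        congr 1
        · exact Finset.sum_congr rfl (fun j hj => abs_of_nonneg (Finset.mem_filter.mp hj).2)
        · exact Finset.sum_congr rfl (fun j hj =>
            abs_of_neg (lt_of_not_ge (Finset.mem_filter.mp hj).2))
      have h3 : ∑ j ∈ T₀, d j + ∑ j ∈ S.filter (fun j => ¬ 0 ≤ d j), d j = 0 := by
        rw [Finset.sum_filter_add_sum_filter_not]
        exact hdsum
      rw [h2, Finset.sum_neg_distrib]
      linarith
    have hT₀bound : ∑ j ∈ T₀, d j ≤ a := by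
      have hZsum : ∑ j ∈ T₀, d j = (1/n : ℝ) * ∑ i, Z T₀ i ω := by
        have hdj : ∀ j, d j = (1/n : ℝ) * ∑ i, (Y i ω j - θ j) := by
          intro j
          simp only [hd, hYbar]
          simp only [Finset.sum_sub_distrib, Finset.sum_const, Finset.card_univ,
            Fintype.card_fin, nsmul_eq_mul, mul_sub]
          have : (1/n : ℝ) * ((n:ℝ) * θ j) = θ j := by field_simp
          rw [this]
        calc ∑ j ∈ T₀, d j = ∑ j ∈ T₀, (1/n : ℝ) * ∑ i, (Y i ω j - θ j) :=
              Finset.sum_congr rfl (fun j _ => hdj j)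
          _ = (1/n : ℝ) * ∑ j ∈ T₀, ∑ i, (Y i ω j - θ j) := by rw [Finset.mul_sum]
          _ = (1/n : ℝ) * ∑ i, ∑ j ∈ T₀, (Y i ω j - θ j) := by rw [Finset.sum_comm]
          _ = (1/n : ℝ) * ∑ i, Z T₀ i ω := by simp only [hZ]
      rw [hZsum]
      have hlt := hT T₀ (Finset.mem_powerset.mpr (Finset.filter_subset _ _))
      calc (1/n : ℝ) * ∑ i, Z T₀ i ω ≤ (1/n : ℝ) * ((n:ℝ) * a) :=
            mul_le_mul_of_nonneg_left hlt.le (by positivity)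
        _ = a := by field_simp
    -- triangle inequality
    have htri : dTV Xbar θ ≤ dTV Ybar θ + (1/2) * ∑ j, |Xbar j - Ybar j| := by
      rw [dTV, dTV, ← mul_add, ← Finset.sum_add_distrib]
      refine mul_le_mul_of_nonneg_left (Finset.sum_le_sum (fun j _ => ?_)) (by norm_num)
      calc |Xbar j - θ j| = |(Ybar j - θ j) + (Xbar j - Ybar j)| := by ring_nf
        _ ≤ |Ybar j - θ j| + |Xbar j - Ybar j| := abs_add_le _ _
    calc dTV Xbar θ ≤ dTV Ybar θ + (1/2) * ∑ j, |Xbar j - Ybar j| := htri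
      _ ≤ a + (1/2) * (2*ε) := by
          refine add_le_add (by rw [hTV_Y]; exact hT₀bound) ?_
          exact mul_le_mul_of_nonneg_left hcont (by norm_num)
      _ ≤ Real.sqrt (s / n) + 2 * ε + Real.sqrt (2 * L / n) := by
          rw [ha]
          linarith
  -- conclude
  have hmono : μ Bᶜ ≤ μ {ω | dTV (fun j => (1 / n : ℝ) * ∑ i, X i ω j) θ ≤
      Real.sqrt (s / n) + 2 * ε + Real.sqrt (2 * Real.log (1 / δ) / n)} := by
    exact measure_mono_ae hgood
  refine le_trans ?_ hmono
  rw [prob_compl_eq_one_sub hBmeas]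
  calc ENNReal.ofReal (1 - δ) ≤ 1 - ENNReal.ofReal δ := by
        refine ENNReal.le_sub_of_add_le_left ENNReal.ofReal_ne_top ?_
        rw [← ENNReal.ofReal_add hδ0.le (by linarith : (0:ℝ) ≤ 1 - δ)]
        simp
    _ ≤ 1 - μ B := tsub_le_tsub_left hBprob 1
end
end

section
/- For every measurable estimator θ̂_n : 𝒳^n → Θ, every θ* ∈ Θ, and every ε ∈ (0,1/2): R^{HC}_{d,n}(ε, θ*, θ̂_n) ≤ R^{HDC}_{d,n}(2ε, θ*, θ̂_n) + e^{−nε/3} · R^{HDC}_{d,n}(1, θ*, θ̂_n). -/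
open MeasureTheory ProbabilityTheory
open scoped ENNReal

noncomputable section

/-- Huber's contamination model `M_n^{HC}(ε, θ*)`: the joint laws of `n` i.i.d.
observations drawn from the mixture `(1-ε)·P_{θ*} + ε·Q` for some probability
measure `Q`. -/
def huberHC {𝒳 : Type*} [MeasurableSpace 𝒳] (n : ℕ) (ε : ℝ) (Pstar : Measure 𝒳) :
    Set (Measure (Fin n → 𝒳)) :=
  {μn | ∃ Q : Measure 𝒳, IsProbabilityMeasure Q ∧
    μn = Measure.pi fun _ => (ENNReal.ofReal (1 - ε) • Pstar + ENNReal.ofReal ε • Q)}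

/-- Huber's deterministic contamination model `M_n^{HDC}(ε, θ*)`: the joint laws of
`n` independent observations which follow `P_{θ*}` outside a deterministic set `O`
with `|O| ≤ εn` and some probability measure `Q` on `O`. -/
def huberHDC {𝒳 : Type*} [MeasurableSpace 𝒳] (n : ℕ) (ε : ℝ) (Pstar : Measure 𝒳) :
    Set (Measure (Fin n → 𝒳)) :=
  {μn | ∃ O : Finset (Fin n), (O.card : ℝ) ≤ ε * n ∧
    ∃ Q : Measure 𝒳, IsProbabilityMeasure Q ∧
      μn = Measure.pi fun i => if i ∈ O then Q else Pstar}

/-- Worst-case risk of an estimator `est` over a contamination model, the quality of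
estimation being measured by the pseudometric `edist` of `Θ`. -/
def risk {𝒳 Θ : Type*} [MeasurableSpace 𝒳] [PseudoEMetricSpace Θ] {n : ℕ}
    (model : Set (Measure (Fin n → 𝒳))) (est : (Fin n → 𝒳) → Θ) (θ : Θ) : ℝ≥0∞ :=
  ⨆ μn ∈ model, ∫⁻ x, edist (est x) θ ∂μn

/-- Auxiliary: binomial-type expansion of `(x+y)^n` as a sum over subsets. -/
lemma aux_sum_pow_card {R : Type*} [CommSemiring R] (n : ℕ) (x y : R) :
    ∑ S ∈ (Finset.univ : Finset (Fin n)).powerset, x ^ S.card * y ^ (n - S.card)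
      = (x + y) ^ n := by
  have h := Finset.prod_add (fun _ : Fin n => x) (fun _ : Fin n => y) Finset.univ
  simp only [Finset.prod_const, Finset.card_sdiff_of_subset (Finset.subset_univ _),
    Finset.card_univ, Fintype.card_fin] at h
  simpa using h.symm

/-- Auxiliary: the product of a mixture measure decomposes as a mixture of
contaminated product measures. -/
lemma aux_pi_mix_eq_sum {𝒳 : Type*} [MeasurableSpace 𝒳] (n : ℕ) (a b : ℝ≥0∞)
    (ha : a ≠ ∞) (hb : b ≠ ∞) (P Q : Measure 𝒳)
    [IsProbabilityMeasure P] [IsProbabilityMeasure Q] :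
    Measure.pi (fun _ : Fin n => a • P + b • Q) =
      ∑ S ∈ (Finset.univ : Finset (Fin n)).powerset,
        (b ^ S.card * a ^ (n - S.card)) •
          Measure.pi (fun i => if i ∈ S then Q else P) := by
  haveI hfin : IsFiniteMeasure (a • P + b • Q) := by
    constructor
    simp only [Measure.add_apply, Measure.smul_apply, smul_eq_mul]
    exact ENNReal.add_lt_top.2 ⟨ENNReal.mul_lt_top ha.lt_top (measure_lt_top _ _),
      ENNReal.mul_lt_top hb.lt_top (measure_lt_top _ _)⟩
  haveI : ∀ S : Finset (Fin n), ∀ i : Fin n,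
      SigmaFinite ((fun i => if i ∈ S then Q else P) i) := by
    intro S i; dsimp only; split_ifs <;> infer_instance
  apply Measure.pi_eq
  intro s hs
  rw [Measure.finset_sum_apply]
  simp only [Measure.smul_apply, smul_eq_mul, Measure.pi_pi,
    Measure.add_apply]
  have key : ∀ S : Finset (Fin n),
      ∏ i, (if i ∈ S then Q else P) (s i)
        = (∏ i ∈ S, Q (s i)) * ∏ i ∈ Finset.univ \ S, P (s i) := by
    intro S
    calc ∏ i, (if i ∈ S then Q else P) (s i)
        = ∏ i ∈ S ∪ (Finset.univ \ S), (if i ∈ S then Q else P) (s i) := by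
          rw [Finset.union_sdiff_of_subset (Finset.subset_univ S)]
      _ = (∏ i ∈ S, (if i ∈ S then Q else P) (s i))
            * ∏ i ∈ Finset.univ \ S, (if i ∈ S then Q else P) (s i) :=
          Finset.prod_union Finset.disjoint_sdiff
      _ = (∏ i ∈ S, Q (s i)) * ∏ i ∈ Finset.univ \ S, P (s i) := by
          congr 1
          · exact Finset.prod_congr rfl fun i hi => by rw [if_pos hi]
          · exact Finset.prod_congr rfl fun i hi => by
              rw [if_neg (Finset.mem_sdiff.mp hi).2]
  simp only [key]
  have h2 : ∀ i : Fin n, a * P (s i) + b * Q (s i) = b * Q (s i) + a * P (s i) :=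
    fun i => add_comm _ _
  simp only [h2]
  rw [Finset.prod_add (fun i => b * Q (s i)) (fun i => a * P (s i)) Finset.univ]
  refine Finset.sum_congr rfl fun S _ => ?_
  rw [Finset.prod_mul_distrib, Finset.prod_mul_distrib, Finset.prod_const,
    Finset.prod_const, Finset.card_sdiff_of_subset (Finset.subset_univ S),
    Finset.card_univ, Fintype.card_fin]
  ring

/-- Auxiliary: Chernoff-type bound on the binomial tail beyond `2εn`. -/
lemma aux_tail_bound (n : ℕ) (ε : ℝ) (hε0 : 0 < ε) (hε : ε < 1/2) :
    ∑ S ∈ (Finset.univ : Finset (Fin n)).powerset.filter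
        (fun S => ¬ ((S.card : ℝ) ≤ 2 * ε * n)),
      ε ^ S.card * (1 - ε) ^ (n - S.card) ≤ Real.exp (-(n * ε) / 3) := by
  have h1ε : (0:ℝ) ≤ 1 - ε := by linarith
  have hlog : (2:ℝ)/3 ≤ Real.log 2 := by
    have := Real.log_two_gt_d9; norm_num at this ⊢; linarith
  have hlog0 : (0:ℝ) ≤ Real.log 2 := by linarith
  have hn : (0:ℝ) ≤ (n:ℝ) * ε := by positivity
  set c := Real.exp (-(2*ε*n) * Real.log 2) with hc
  have step1 : ∑ S ∈ (Finset.univ : Finset (Fin n)).powerset.filter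
        (fun S => ¬ ((S.card : ℝ) ≤ 2 * ε * n)),
      ε ^ S.card * (1 - ε) ^ (n - S.card)
      ≤ ∑ S ∈ (Finset.univ : Finset (Fin n)).powerset.filter
        (fun S => ¬ ((S.card : ℝ) ≤ 2 * ε * n)),
        c * ((2*ε) ^ S.card * (1 - ε) ^ (n - S.card)) := by
    refine Finset.sum_le_sum fun S hS => ?_
    have hScard : 2 * ε * n ≤ (S.card : ℝ) := by
      have h := (Finset.mem_filter.mp hS).2
      push_neg at h
      exact h.le
    have h2k : (1:ℝ) ≤ c * 2 ^ S.card := by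
      have h2e : (2:ℝ) ^ S.card = Real.exp ((S.card : ℝ) * Real.log 2) := by
        rw [Real.exp_nat_mul, Real.exp_log (by norm_num : (0:ℝ) < 2)]
      rw [h2e, hc, ← Real.exp_add]
      have : (0:ℝ) ≤ -(2*ε*n) * Real.log 2 + (S.card : ℝ) * Real.log 2 := by
        have := mul_le_mul_of_nonneg_right hScard hlog0
        nlinarith
      calc (1:ℝ) = Real.exp 0 := Real.exp_zero.symm
        _ ≤ _ := Real.exp_le_exp.2 this
    have hterm : (0:ℝ) ≤ ε ^ S.card * (1 - ε) ^ (n - S.card) := by positivity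
    calc ε ^ S.card * (1 - ε) ^ (n - S.card)
        = 1 * (ε ^ S.card * (1 - ε) ^ (n - S.card)) := (one_mul _).symm
      _ ≤ (c * 2 ^ S.card) * (ε ^ S.card * (1 - ε) ^ (n - S.card)) :=
          mul_le_mul_of_nonneg_right h2k hterm
      _ = c * ((2*ε) ^ S.card * (1 - ε) ^ (n - S.card)) := by
          rw [mul_pow]; ring
  have step2 : ∑ S ∈ (Finset.univ : Finset (Fin n)).powerset.filter
        (fun S => ¬ ((S.card : ℝ) ≤ 2 * ε * n)),
        c * ((2*ε) ^ S.card * (1 - ε) ^ (n - S.card))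
      ≤ c * (1 + ε) ^ n := by
    have hsub : ∑ S ∈ (Finset.univ : Finset (Fin n)).powerset.filter
          (fun S => ¬ ((S.card : ℝ) ≤ 2 * ε * n)),
          c * ((2*ε) ^ S.card * (1 - ε) ^ (n - S.card))
        ≤ ∑ S ∈ (Finset.univ : Finset (Fin n)).powerset,
          c * ((2*ε) ^ S.card * (1 - ε) ^ (n - S.card)) := by
      refine Finset.sum_le_sum_of_subset_of_nonneg (Finset.filter_subset _ _)
        fun S _ _ => by positivity
    refine hsub.trans ?_
    rw [← Finset.mul_sum]
    have : ∑ S ∈ (Finset.univ : Finset (Fin n)).powerset,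
        (2*ε) ^ S.card * (1 - ε) ^ (n - S.card) = (1 + ε) ^ n := by
      rw [aux_sum_pow_card n (2*ε) (1-ε)]
      ring_nf
    rw [this]
  refine (step1.trans step2).trans ?_
  have h3 : (1 + ε) ^ n ≤ Real.exp ((n:ℝ) * ε) := by
    calc (1 + ε) ^ n ≤ Real.exp ε ^ n :=
          pow_le_pow_left₀ (by linarith) (by linarith [Real.add_one_le_exp ε]) n
      _ = Real.exp ((n:ℝ) * ε) := (Real.exp_nat_mul ε n).symm
  calc c * (1 + ε) ^ n ≤ c * Real.exp ((n:ℝ) * ε) :=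
        mul_le_mul_of_nonneg_left h3 (Real.exp_nonneg _)
    _ = Real.exp (-(2*ε*n) * Real.log 2 + (n:ℝ) * ε) := (Real.exp_add _ _).symm
    _ ≤ Real.exp (-(n * ε) / 3) := by
        refine Real.exp_le_exp.2 ?_
        nlinarith [mul_le_mul_of_nonneg_left hlog hn]

/-- Auxiliary: a member of the model has integral bounded by the risk. -/
lemma aux_lintegral_le_risk {𝒳 Θ : Type*} [MeasurableSpace 𝒳] [PseudoEMetricSpace Θ] {n : ℕ}
    (model : Set (Measure (Fin n → 𝒳))) (est : (Fin n → 𝒳) → Θ) (θ : Θ)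
    {ν : Measure (Fin n → 𝒳)} (hν : ν ∈ model) :
    ∫⁻ x, edist (est x) θ ∂ν ≤ risk model est θ :=
  le_iSup₂_of_le ν hν le_rfl

/-- `R^{HC}_{d,n}(ε, θ*, θ̂_n) ≤ R^{HDC}_{d,n}(2ε, θ*, θ̂_n)
      + e^{-nε/3}·R^{HDC}_{d,n}(1, θ*, θ̂_n)`. -/
theorem huberHC_risk_le_huberHDC_risk
    {𝒳 Θ : Type*} [MeasurableSpace 𝒳] [MeasurableSpace Θ] [PseudoMetricSpace Θ]
    (P : Θ → Measure 𝒳) (hP : ∀ θ, IsProbabilityMeasure (P θ))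
    (n : ℕ) (est : (Fin n → 𝒳) → Θ) (hest : Measurable est)
    (θstar : Θ) (ε : ℝ) (hε0 : 0 < ε) (hε : ε < 1 / 2) :
    risk (huberHC n ε (P θstar)) est θstar ≤
      risk (huberHDC n (2 * ε) (P θstar)) est θstar +
        ENNReal.ofReal (Real.exp (-(n * ε) / 3)) *
          risk (huberHDC n 1 (P θstar)) est θstar := by
  have h1ε : (0:ℝ) ≤ 1 - ε := by linarith
  haveI := hP θstar
  refine iSup₂_le fun μn hμn => ?_
  obtain ⟨Q, hQ, rfl⟩ := hμn
  haveI := hQ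
  have ha : ENNReal.ofReal (1 - ε) ≠ ∞ := ENNReal.ofReal_ne_top
  have hb : ENNReal.ofReal ε ≠ ∞ := ENNReal.ofReal_ne_top
  rw [aux_pi_mix_eq_sum n (ENNReal.ofReal (1 - ε)) (ENNReal.ofReal ε) ha hb (P θstar) Q,
    lintegral_finset_sum_measure]
  simp only [lintegral_smul_measure]
  set A := risk (huberHDC n (2 * ε) (P θstar)) est θstar with hA
  set B := risk (huberHDC n 1 (P θstar)) est θstar with hB
  set c : Finset (Fin n) → ℝ≥0∞ :=
    fun S => ENNReal.ofReal ε ^ S.card * ENNReal.ofReal (1 - ε) ^ (n - S.card) with hcdef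
  set I : Finset (Fin n) → ℝ≥0∞ :=
    fun S => ∫⁻ x, edist (est x) θstar ∂ Measure.pi (fun i => if i ∈ S then Q else P θstar)
    with hIdef
  have hIA : ∀ S : Finset (Fin n), (S.card : ℝ) ≤ 2 * ε * n → I S ≤ A := by
    intro S hS
    exact aux_lintegral_le_risk _ est θstar ⟨S, hS, Q, hQ, rfl⟩
  have hIB : ∀ S : Finset (Fin n), I S ≤ B := by
    intro S
    refine aux_lintegral_le_risk _ est θstar ⟨S, ?_, Q, hQ, rfl⟩
    rw [one_mul]
    exact_mod_cast S.card_le_univ.trans_eq (by simp)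
  rw [← Finset.sum_filter_add_sum_filter_not ((Finset.univ : Finset (Fin n)).powerset)
    (fun S => (S.card : ℝ) ≤ 2 * ε * n)]
  have hsmall : ∑ S ∈ (Finset.univ : Finset (Fin n)).powerset.filter
      (fun S => (S.card : ℝ) ≤ 2 * ε * n), c S * I S ≤ A := by
    calc ∑ S ∈ (Finset.univ : Finset (Fin n)).powerset.filter
          (fun S => (S.card : ℝ) ≤ 2 * ε * n), c S * I S
        ≤ ∑ S ∈ (Finset.univ : Finset (Fin n)).powerset.filter
          (fun S => (S.card : ℝ) ≤ 2 * ε * n), c S * A :=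
          Finset.sum_le_sum fun S hS =>
            mul_le_mul_right (hIA S (Finset.mem_filter.mp hS).2) _
      _ = (∑ S ∈ (Finset.univ : Finset (Fin n)).powerset.filter
          (fun S => (S.card : ℝ) ≤ 2 * ε * n), c S) * A := (Finset.sum_mul _ _ _).symm
      _ ≤ (∑ S ∈ (Finset.univ : Finset (Fin n)).powerset, c S) * A :=
          mul_le_mul_left (Finset.sum_le_sum_of_subset (Finset.filter_subset _ _)) _
      _ = A := by
          rw [hcdef]
          rw [aux_sum_pow_card n (ENNReal.ofReal ε) (ENNReal.ofReal (1 - ε))]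
          rw [← ENNReal.ofReal_add hε0.le h1ε]
          norm_num
  have hbig : ∑ S ∈ (Finset.univ : Finset (Fin n)).powerset.filter
      (fun S => ¬ ((S.card : ℝ) ≤ 2 * ε * n)), c S * I S
      ≤ ENNReal.ofReal (Real.exp (-(n * ε) / 3)) * B := by
    have hcoef : ∑ S ∈ (Finset.univ : Finset (Fin n)).powerset.filter
        (fun S => ¬ ((S.card : ℝ) ≤ 2 * ε * n)), c S
        ≤ ENNReal.ofReal (Real.exp (-(n * ε) / 3)) := by
      have hre : ∀ S : Finset (Fin n),
          c S = ENNReal.ofReal (ε ^ S.card * (1 - ε) ^ (n - S.card)) := by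
        intro S
        rw [hcdef, ENNReal.ofReal_mul (by positivity), ENNReal.ofReal_pow hε0.le,
          ENNReal.ofReal_pow h1ε]
      simp only [hre]
      rw [← ENNReal.ofReal_sum_of_nonneg (fun S _ => by positivity)]
      exact ENNReal.ofReal_le_ofReal (aux_tail_bound n ε hε0 hε)
    calc ∑ S ∈ (Finset.univ : Finset (Fin n)).powerset.filter
          (fun S => ¬ ((S.card : ℝ) ≤ 2 * ε * n)), c S * I S
        ≤ ∑ S ∈ (Finset.univ : Finset (Fin n)).powerset.filter
          (fun S => ¬ ((S.card : ℝ) ≤ 2 * ε * n)), c S * B :=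
          Finset.sum_le_sum fun S _ => mul_le_mul_right (hIB S) _
      _ = (∑ S ∈ (Finset.univ : Finset (Fin n)).powerset.filter
          (fun S => ¬ ((S.card : ℝ) ≤ 2 * ε * n)), c S) * B := (Finset.sum_mul _ _ _).symm
      _ ≤ ENNReal.ofReal (Real.exp (-(n * ε) / 3)) * B :=
          mul_le_mul_left hcoef _
  exact add_le_add hsmall hbig
end
end

section
/- Let Y_1,…,Y_n be i.i.d. random vectors taking values in the probability simplex Δ^{k-1} whose mean θ* = E[Y_1] has at most s nonzero coordinates, and let Ȳ_n := (1/n) Σ_{i=1}^n Y_i. Then E[d_TV(Ȳ_n, θ*)] ≤ (1/2) (s/n)^{1/2}. -/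
open MeasureTheory ProbabilityTheory

noncomputable section

lemma abs_integral_le_sqrt_sq {Ω : Type} [MeasurableSpace Ω] (μ : Measure Ω)
    [IsProbabilityMeasure μ] (W : Ω → ℝ) (hW : MemLp W 2 μ) :
    ∫ ω, |W ω| ∂μ ≤ Real.sqrt (∫ ω, W ω ^ 2 ∂μ) := by
  have hconj : Real.HolderConjugate 2 2 := Real.holderConjugate_iff.mpr ⟨one_lt_two, by norm_num⟩
  have h2 : (ENNReal.ofReal (2:ℝ)) = 2 := by norm_num
  have habs : MemLp (fun ω => |W ω|) 2 μ := hW.abs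
  have h := integral_mul_le_Lp_mul_Lq_of_nonneg hconj
      (f := fun ω => |W ω|) (g := fun _ => (1:ℝ))
      (ae_of_all _ fun ω => abs_nonneg _) (ae_of_all _ fun _ => zero_le_one)
      (h2 ▸ habs) (h2 ▸ memLp_const 1)
  simp only [mul_one] at h
  have hsq : ∫ ω, |W ω| ^ (2:ℝ) ∂μ = ∫ ω, W ω ^ 2 ∂μ := by
    refine integral_congr_ae (ae_of_all _ fun ω => ?_)
    show |W ω| ^ (2:ℝ) = W ω ^ 2
    rw [show ((2:ℝ)) = ((2:ℕ):ℝ) from by norm_num, Real.rpow_natCast, sq_abs]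
  have hone : ∫ ω, (1:ℝ) ^ (2:ℝ) ∂μ = 1 := by simp
  rw [hsq, hone] at h
  simpa [Real.sqrt_eq_rpow] using h

/-- For i.i.d. simplex-valued observations with an `s`-sparse mean,
`E[d_TV(Ȳ_n, θ*)] ≤ (1/2)·(s/n)^{1/2}`. -/
theorem sample_mean_TV_risk_iid
    {Ω : Type} [MeasurableSpace Ω] (μ : Measure Ω) [IsProbabilityMeasure μ]
    (k s n : ℕ) (hk : 1 ≤ k) (hn : 1 ≤ n)
    (Y : Fin n → Ω → Fin k → ℝ)
    (hYmeas : ∀ i, Measurable (Y i))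
    (hYindep : iIndepFun Y μ)
    (hYid : ∀ i j, IdentDistrib (Y i) (Y j) μ μ)
    (hYval : ∀ i ω, Y i ω ∈ simplex k)
    (θ : Fin k → ℝ) (hθmean : ∀ i j, ∫ ω, Y i ω j ∂μ = θ j)
    (hθsparse : sparse s θ) :
    ∫ ω, dTV (fun j => (1 / n : ℝ) * ∑ i, Y i ω j) θ ∂μ ≤
      (1 / 2) * Real.sqrt (s / n) := by
  classical
  have hn0 : (0:ℝ) < n := by exact_mod_cast hn
  set Z : Fin k → Fin n → Ω → ℝ := fun j i ω => Y i ω j with hZdef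
  have hZmeas : ∀ j i, Measurable (Z j i) := fun j i => (measurable_pi_apply j).comp (hYmeas i)
  have hZ01 : ∀ j i ω, Z j i ω ∈ Set.Icc (0:ℝ) 1 := by
    intro j i ω
    obtain ⟨hpos, hsum⟩ := hYval i ω
    exact ⟨hpos j, by
      calc Y i ω j ≤ ∑ j', Y i ω j' :=
            Finset.single_le_sum (fun j' _ => hpos j') (Finset.mem_univ j)
        _ = 1 := hsum⟩
  have hZmem : ∀ j i, MemLp (Z j i) 2 μ := fun j i =>
    memLp_of_bounded (ae_of_all _ (hZ01 j i)) (hZmeas j i).aestronglyMeasurable 2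
  have hZint : ∀ j i, Integrable (Z j i) μ := fun j i => (hZmem j i).integrable one_le_two
  have i0 : Fin n := ⟨0, hn⟩
  have hθnn : ∀ j, 0 ≤ θ j := fun j => by
    rw [← hθmean i0 j]
    exact integral_nonneg fun ω => (hZ01 j i0 ω).1
  have hθsum1 : ∑ j, θ j = 1 := by
    calc ∑ j, θ j = ∑ j, ∫ ω, Y i0 ω j ∂μ := by simp_rw [hθmean]
      _ = ∫ ω, ∑ j, Y i0 ω j ∂μ := (integral_finset_sum _ fun j _ => hZint j i0).symm
      _ = ∫ _, (1:ℝ) ∂μ := integral_congr_ae (ae_of_all _ fun ω => (hYval i0 ω).2)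
      _ = 1 := by simp
  -- per-coordinate bound
  have key : ∀ j, ∫ ω, |(1 / n : ℝ) * ∑ i, Y i ω j - θ j| ∂μ ≤ Real.sqrt (θ j / n) := by
    intro j
    set X : Ω → ℝ := fun ω => (1 / n : ℝ) * ∑ i, Y i ω j with hXdef
    have hXeq : X = fun ω => (1 / n : ℝ) * (∑ i, Z j i) ω := by
      funext ω; simp [hXdef, Finset.sum_apply]; left; rfl
    have hXmem : MemLp X 2 μ := by
      rw [hXeq]
      exact (memLp_finset_sum' _ fun i _ => hZmem j i).const_mul _
    have hEX : ∫ ω, X ω ∂μ = θ j := by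
      simp only [hXdef]
      rw [integral_const_mul, integral_finset_sum _ fun i _ => hZint j i]
      simp only [hZdef, hθmean _ j, Finset.sum_const, Finset.card_univ, Fintype.card_fin, nsmul_eq_mul]
      field_simp
    have hindep : iIndepFun (Z j) μ :=
      hYindep.comp (fun _ v => v j) fun _ => measurable_pi_apply j
    have hVarZ : ∀ i, variance (Z j i) μ ≤ θ j := by
      intro i
      calc variance (Z j i) μ ≤ μ[(Z j i) ^ 2] :=
            variance_le_expectation_sq (hZmeas j i).aestronglyMeasurable
        _ ≤ ∫ ω, Z j i ω ∂μ := by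
            refine integral_mono ((hZmem j i).integrable_sq) (hZint j i) fun ω => ?_
            have h01 := hZ01 j i ω
            simpa [pow_two] using mul_le_of_le_one_left h01.1 h01.2
        _ = θ j := hθmean i j
    have hVar : variance X μ ≤ θ j / n := by
      have h1 : variance X μ = (1 / n : ℝ) ^ 2 * variance (∑ i, Z j i) μ := by
        rw [hXeq]; exact variance_const_mul _ _ _
      have h2 : variance (∑ i, Z j i) μ = ∑ i, variance (Z j i) μ :=
        IndepFun.variance_sum (fun i _ => hZmem j i)
          (fun a _ b _ hab => hindep.indepFun hab)
      calc variance X μ = (1 / n : ℝ) ^ 2 * ∑ i, variance (Z j i) μ := by rw [h1, h2]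
        _ ≤ (1 / n : ℝ) ^ 2 * ∑ _i : Fin n, θ j := by
            gcongr with i _
            exact hVarZ i
        _ = θ j / n := by
            simp only [Finset.sum_const, Finset.card_univ, Fintype.card_fin, nsmul_eq_mul]
            field_simp
    have hWmem : MemLp (fun ω => X ω - θ j) 2 μ := hXmem.sub (memLp_const _)
    have hle := abs_integral_le_sqrt_sq μ _ hWmem
    have hveq : ∫ ω, (X ω - θ j) ^ 2 ∂μ = variance X μ := by
      rw [variance_eq_integral hXmem.1.aemeasurable, hEX]
    rw [hveq] at hle
    calc ∫ ω, |(1 / n : ℝ) * ∑ i, Y i ω j - θ j| ∂μ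
        = ∫ ω, |X ω - θ j| ∂μ := rfl
      _ ≤ Real.sqrt (variance X μ) := hle
      _ ≤ Real.sqrt (θ j / n) := Real.sqrt_le_sqrt hVar
  -- integrability of each coordinate deviation
  have hint2 : ∀ j, Integrable (fun ω => |(1 / n : ℝ) * ∑ i, Y i ω j - θ j|) μ := by
    intro j
    refine Integrable.abs ?_
    exact (((integrable_finset_sum _ fun i _ => hZint j i).const_mul _).sub (integrable_const _))
  have hLHS : ∫ ω, dTV (fun j => (1 / n : ℝ) * ∑ i, Y i ω j) θ ∂μ
      = (1 / 2 : ℝ) * ∑ j, ∫ ω, |(1 / n : ℝ) * ∑ i, Y i ω j - θ j| ∂μ := by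
    simp only [dTV]
    rw [integral_const_mul, integral_finset_sum _ fun j _ => hint2 j]
  rw [hLHS]
  have hsum : ∑ j, ∫ ω, |(1 / n : ℝ) * ∑ i, Y i ω j - θ j| ∂μ ≤ Real.sqrt (s / n) := by
    set S : Finset (Fin k) := Finset.univ.filter fun j => θ j ≠ 0 with hSdef
    have hfilter : ∑ j ∈ S, Real.sqrt (θ j / n) = ∑ j, Real.sqrt (θ j / n) :=
      Finset.sum_filter_of_ne fun j _ hne => by
        intro h0
        apply hne
        simp [h0]
    have hCS : (∑ j ∈ S, Real.sqrt (θ j / n)) ^ 2 ≤ (S.card : ℝ) * ∑ j ∈ S, (θ j / n) := by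
      have := Finset.sum_mul_sq_le_sq_mul_sq S (fun _ => (1:ℝ)) (fun j => Real.sqrt (θ j / n))
      simp only [one_mul, one_pow] at this
      calc (∑ j ∈ S, Real.sqrt (θ j / n)) ^ 2
          ≤ (∑ _j ∈ S, (1:ℝ)) * ∑ j ∈ S, Real.sqrt (θ j / n) ^ 2 := this
        _ = (S.card : ℝ) * ∑ j ∈ S, (θ j / n) := by
            congr 1
            · simp
            · exact Finset.sum_congr rfl fun j _ =>
                Real.sq_sqrt (div_nonneg (hθnn j) hn0.le)
    have hθS : ∑ j ∈ S, θ j ≤ 1 := by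
      rw [← hθsum1]
      exact Finset.sum_le_sum_of_subset_of_nonneg (Finset.filter_subset _ _)
        fun j _ _ => hθnn j
    have hsumS : ∑ j ∈ S, (θ j / n) ≤ 1 / n := by
      rw [← Finset.sum_div]
      gcongr
    have hsq2 : (∑ j ∈ S, Real.sqrt (θ j / n)) ^ 2 ≤ (s : ℝ) / n := by
      calc (∑ j ∈ S, Real.sqrt (θ j / n)) ^ 2
          ≤ (S.card : ℝ) * ∑ j ∈ S, (θ j / n) := hCS
        _ ≤ (s : ℝ) * (1 / n) := by
            apply mul_le_mul ?_ hsumS ?_ (Nat.cast_nonneg s)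
            · exact_mod_cast hθsparse
            · exact Finset.sum_nonneg fun j _ => div_nonneg (hθnn j) hn0.le
        _ = (s : ℝ) / n := by ring
    have hfin : ∑ j ∈ S, Real.sqrt (θ j / n) ≤ Real.sqrt ((s : ℝ) / n) :=
      (Real.le_sqrt (Finset.sum_nonneg fun j _ => Real.sqrt_nonneg _)
        (div_nonneg (Nat.cast_nonneg s) hn0.le)).mpr hsq2
    calc ∑ j, ∫ ω, |(1 / n : ℝ) * ∑ i, Y i ω j - θ j| ∂μ
        ≤ ∑ j, Real.sqrt (θ j / n) := Finset.sum_le_sum fun j _ => key j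
      _ = ∑ j ∈ S, Real.sqrt (θ j / n) := hfilter.symm
      _ ≤ Real.sqrt ((s : ℝ) / n) := hfin
  calc (1 / 2 : ℝ) * ∑ j, ∫ ω, |(1 / n : ℝ) * ∑ i, Y i ω j - θ j| ∂μ
      ≤ (1 / 2 : ℝ) * Real.sqrt ((s : ℝ) / n) := by gcongr
    _ = (1 / 2 : ℝ) * Real.sqrt ((s : ℕ) / (n : ℕ) : ℝ) := by norm_num
end
end

section
/- Let Y_1,…,Y_n be i.i.d. random vectors taking values in the probability simplex Δ^{k-1} whose mean θ* = E[Y_1] has at most s nonzero coordinates (s ≥ 1), and let Ȳ_n := (1/n) Σ_{i=1}^n Y_i. Then E[d_H²(Ȳ_n, θ*)] ≤ (s − 1)/n, and consequently E[d_H(Ȳ_n, θ*)] ≤ (s/n)^{1/2}. -/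
open MeasureTheory ProbabilityTheory

noncomputable section

lemma sqrt_sub_sq_le_aux {a b : ℝ} (ha : 0 ≤ a) (hb : 0 < b) :
    (Real.sqrt a - Real.sqrt b) ^ 2 ≤ (a - b) ^ 2 / b := by
  rw [le_div_iff₀ hb]
  nlinarith [Real.sq_sqrt ha, Real.sq_sqrt hb.le, Real.sqrt_nonneg a, Real.sqrt_nonneg b,
    sq_nonneg ((Real.sqrt a - Real.sqrt b) * Real.sqrt a),
    mul_nonneg (mul_nonneg (sq_nonneg (Real.sqrt a - Real.sqrt b)) (Real.sqrt_nonneg a))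
      (Real.sqrt_nonneg b)]

/-- Main analytic/probabilistic core, with the per-coordinate variance bounds
abstracted as hypotheses. -/
theorem hellinger_risk_aux {Ω : Type} [MeasurableSpace Ω] (μ : Measure Ω)
    [IsProbabilityMeasure μ]
    {k : ℕ} (Z : Fin k → Ω → ℝ) (θ : Fin k → ℝ) (s : ℕ) (c : ℝ) (hc : 0 ≤ c)
    (hZmeas : ∀ j, Measurable (Z j))
    (hZ01 : ∀ j ω, Z j ω ∈ Set.Icc (0 : ℝ) 1)
    (hZsum : ∀ ω, ∑ j, Z j ω = 1)
    (hθ0 : ∀ j, 0 ≤ θ j) (hθsum : ∑ j, θ j = 1)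
    (hzero : ∀ j, θ j = 0 → ∀ᵐ ω ∂μ, Z j ω = 0)
    (hvar : ∀ j, θ j ≠ 0 → ∫ ω, (Z j ω - θ j) ^ 2 ∂μ ≤ (θ j - θ j ^ 2) * c)
    (hcard : ((Finset.univ.filter fun j => θ j ≠ 0).card : ℝ) ≤ s) :
    (∫ ω, dH (fun j => Z j ω) θ ^ 2 ∂μ ≤ ((s : ℝ) - 1) * c) ∧
      ∫ ω, dH (fun j => Z j ω) θ ∂μ ≤ Real.sqrt ((s : ℝ) * c) := by
  classical
  set F : Ω → ℝ := fun ω => dH (fun j => Z j ω) θ with hF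
  have hθ1 : ∀ j, θ j ≤ 1 := by
    intro j
    rw [← hθsum]
    exact Finset.single_le_sum (fun i _ => hθ0 i) (Finset.mem_univ j)
  have hFmeas : Measurable F := by
    simp only [hF, dH]
    exact (Finset.measurable_sum _ fun j _ =>
      ((hZmeas j).sqrt.sub measurable_const).pow_const 2).sqrt
  -- the comparison functions
  set g : Fin k → Ω → ℝ := fun j ω => if θ j = 0 then 0 else (Z j ω - θ j) ^ 2 / θ j with hg
  have hθpos : ∀ j, θ j ≠ 0 → 0 < θ j := fun j hj => lt_of_le_of_ne (hθ0 j) (Ne.symm hj)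
  have hsqint : ∀ j, Integrable (fun ω => (Z j ω - θ j) ^ 2) μ := by
    intro j
    have hm : Measurable (fun ω => (Z j ω - θ j) ^ 2) :=
      ((hZmeas j).sub measurable_const).pow_const 2
    refine (memLp_of_bounded (a := 0) (b := 1) (ae_of_all _ fun ω => ?_)
      hm.aestronglyMeasurable 1).integrable le_rfl
    constructor
    · positivity
    · have h1 := (hZ01 j ω).1
      have h2 := (hZ01 j ω).2
      have h3 := hθ0 j
      have h4 := hθ1 j
      nlinarith
  have hgint : ∀ j, Integrable (g j) μ := by
    intro j
    by_cases hj : θ j = 0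
    · simp only [hg, hj, if_true]
      exact integrable_zero _ _ _
    · simp only [hg, hj, if_false]
      exact (hsqint j).div_const _
  -- a.e. vanishing on the complement of the support
  have hz : ∀ᵐ ω ∂μ, ∀ j, θ j = 0 → Z j ω = 0 := by
    rw [ae_all_iff]
    intro j
    by_cases hj : θ j = 0
    · filter_upwards [hzero j hj] with ω h _ using h
    · exact ae_of_all _ fun ω h => absurd h hj
  -- pointwise bound
  have hae : ∀ᵐ ω ∂μ, F ω ^ 2 ≤ ∑ j, g j ω := by
    filter_upwards [hz] with ω hω
    have hsum_nn : (0 : ℝ) ≤ ∑ j, (Real.sqrt (Z j ω) - Real.sqrt (θ j)) ^ 2 :=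
      Finset.sum_nonneg fun j _ => sq_nonneg _
    have hF2 : F ω ^ 2 = ∑ j, (Real.sqrt (Z j ω) - Real.sqrt (θ j)) ^ 2 := by
      simp only [hF, dH]
      exact Real.sq_sqrt hsum_nn
    rw [hF2]
    refine Finset.sum_le_sum fun j _ => ?_
    by_cases hj : θ j = 0
    · simp [hg, hj, hω j hj]
    · simp only [hg, hj, if_false]
      exact sqrt_sub_sq_le_aux (hZ01 j ω).1 (hθpos j hj)
  -- the first inequality
  have step1 : ∫ ω, F ω ^ 2 ∂μ ≤ ∑ j, ∫ ω, g j ω ∂μ := by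
    calc ∫ ω, F ω ^ 2 ∂μ ≤ ∫ ω, ∑ j, g j ω ∂μ :=
          integral_mono_of_nonneg (ae_of_all _ fun ω => sq_nonneg _)
            (integrable_finset_sum _ fun j _ => hgint j) hae
      _ = ∑ j, ∫ ω, g j ω ∂μ := integral_finset_sum _ fun j _ => hgint j
  have step2 : ∑ j, ∫ ω, g j ω ∂μ ≤ ∑ j, (if θ j = 0 then 0 else (1 - θ j) * c) := by
    refine Finset.sum_le_sum fun j _ => ?_
    by_cases hj : θ j = 0
    · simp [hg, hj]
    · simp only [hg, hj, if_false]
      have hpos := hθpos j hj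
      have : ∫ ω, (Z j ω - θ j) ^ 2 / θ j ∂μ = (∫ ω, (Z j ω - θ j) ^ 2 ∂μ) / θ j :=
        integral_div _ _
      rw [this, div_le_iff₀ hpos]
      calc ∫ ω, (Z j ω - θ j) ^ 2 ∂μ ≤ (θ j - θ j ^ 2) * c := hvar j hj
        _ = (1 - θ j) * c * θ j := by ring
  have step3 : ∑ j, (if θ j = 0 then 0 else (1 - θ j) * c)
      = (((Finset.univ.filter fun j => θ j ≠ 0).card : ℝ) - 1) * c := by
    have h1 : ∑ j, (if θ j = 0 then 0 else (1 - θ j) * c)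
        = ∑ j ∈ Finset.univ.filter fun j => θ j ≠ 0, (1 - θ j) * c := by
      rw [Finset.sum_filter]
      refine Finset.sum_congr rfl fun j _ => ?_
      by_cases hj : θ j = 0 <;> simp [hj]
    have h2 : ∑ j ∈ Finset.univ.filter fun j => θ j ≠ 0, θ j = 1 := by
      rw [Finset.sum_filter_ne_zero, hθsum]
    rw [h1]
    rw [← Finset.sum_mul, Finset.sum_sub_distrib, h2, Finset.sum_const, nsmul_eq_mul, mul_one]
  have hineq1 : ∫ ω, F ω ^ 2 ∂μ ≤ ((s : ℝ) - 1) * c := by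
    calc ∫ ω, F ω ^ 2 ∂μ ≤ ∑ j, (if θ j = 0 then 0 else (1 - θ j) * c) :=
          step1.trans step2
      _ = (((Finset.univ.filter fun j => θ j ≠ 0).card : ℝ) - 1) * c := step3
      _ ≤ ((s : ℝ) - 1) * c := by
          apply mul_le_mul_of_nonneg_right _ hc
          linarith
  refine ⟨hineq1, ?_⟩
  -- second inequality: Cauchy-Schwarz via nonnegativity of the variance
  have hFbd : ∀ ω, F ω ∈ Set.Icc (0 : ℝ) 2 := by
    intro ω
    refine ⟨Real.sqrt_nonneg _, ?_⟩
    have hsum : ∑ j, (Real.sqrt (Z j ω) - Real.sqrt (θ j)) ^ 2 ≤ 4 := by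
      have hle : ∀ j ∈ Finset.univ, (Real.sqrt (Z j ω) - Real.sqrt (θ j)) ^ 2
          ≤ 2 * Z j ω + 2 * θ j := by
        intro j _
        nlinarith [Real.sq_sqrt (hZ01 j ω).1, Real.sq_sqrt (hθ0 j),
          sq_nonneg (Real.sqrt (Z j ω) + Real.sqrt (θ j))]
      calc ∑ j, (Real.sqrt (Z j ω) - Real.sqrt (θ j)) ^ 2
          ≤ ∑ j, (2 * Z j ω + 2 * θ j) := Finset.sum_le_sum hle
        _ = 4 := by
            rw [Finset.sum_add_distrib, ← Finset.mul_sum, ← Finset.mul_sum, hZsum, hθsum]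
            norm_num
    calc F ω = Real.sqrt (∑ j, (Real.sqrt (Z j ω) - Real.sqrt (θ j)) ^ 2) := by
          simp only [hF, dH]
      _ ≤ Real.sqrt 4 := Real.sqrt_le_sqrt hsum
      _ = 2 := by
          rw [show (4 : ℝ) = 2 ^ 2 by norm_num, Real.sqrt_sq (by norm_num)]
  have hFmem : MemLp F 2 μ :=
    memLp_of_bounded (ae_of_all _ hFbd) hFmeas.aestronglyMeasurable 2
  have hvarF : (0 : ℝ) ≤ (∫ ω, F ω ^ 2 ∂μ) - (∫ ω, F ω ∂μ) ^ 2 := by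
    have := variance_nonneg F μ
    rw [variance_eq_sub hFmem] at this
    convert this using 2
    rfl
  have hInn : 0 ≤ ∫ ω, F ω ∂μ := integral_nonneg fun ω => (hFbd ω).1
  rw [Real.le_sqrt hInn (by positivity)]
  calc (∫ ω, F ω ∂μ) ^ 2 ≤ ∫ ω, F ω ^ 2 ∂μ := by linarith
    _ ≤ ((s : ℝ) - 1) * c := hineq1
    _ ≤ (s : ℝ) * c := by
        apply mul_le_mul_of_nonneg_right _ hc
        linarith

/-- For i.i.d. simplex-valued observations with an `s`-sparse mean,
`E[d_H²(Ȳ_n, θ*)] ≤ (s-1)/n` and hence `E[d_H(Ȳ_n, θ*)] ≤ (s/n)^{1/2}`. -/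
theorem sample_mean_Hellinger_risk_iid
    {Ω : Type} [MeasurableSpace Ω] (μ : Measure Ω) [IsProbabilityMeasure μ]
    (k s n : ℕ) (hk : 1 ≤ k) (hs1 : 1 ≤ s) (hn : 1 ≤ n)
    (Y : Fin n → Ω → Fin k → ℝ)
    (hYmeas : ∀ i, Measurable (Y i))
    (hYindep : iIndepFun Y μ)
    (hYid : ∀ i j, IdentDistrib (Y i) (Y j) μ μ)
    (hYval : ∀ i ω, Y i ω ∈ simplex k)
    (θ : Fin k → ℝ) (hθmean : ∀ i j, ∫ ω, Y i ω j ∂μ = θ j)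
    (hθsparse : sparse s θ) :
    (∫ ω, dH (fun j => (1 / n : ℝ) * ∑ i, Y i ω j) θ ^ 2 ∂μ ≤ ((s : ℝ) - 1) / n) ∧
      ∫ ω, dH (fun j => (1 / n : ℝ) * ∑ i, Y i ω j) θ ∂μ ≤ Real.sqrt (s / n) := by
  classical
  have hnpos : (0 : ℝ) < n := by exact_mod_cast hn
  have hnne : (n : ℝ) ≠ 0 := ne_of_gt hnpos
  -- coordinate processes
  set X : Fin k → Fin n → Ω → ℝ := fun j i ω => Y i ω j with hX
  have hY0 : ∀ i ω j, 0 ≤ Y i ω j := fun i ω j => (hYval i ω).1 j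
  have hYs : ∀ i ω, ∑ j, Y i ω j = 1 := fun i ω => (hYval i ω).2
  have hY1 : ∀ i ω j, Y i ω j ≤ 1 := by
    intro i ω j
    rw [← hYs i ω]
    exact Finset.single_le_sum (fun l _ => hY0 i ω l) (Finset.mem_univ j)
  have hXm : ∀ j i, Measurable (X j i) :=
    fun j i => (measurable_pi_apply j).comp (hYmeas i)
  have hX2 : ∀ j i, MemLp (X j i) 2 μ := fun j i =>
    memLp_of_bounded (a := 0) (b := 1)
      (ae_of_all _ fun ω => ⟨hY0 i ω j, hY1 i ω j⟩) (hXm j i).aestronglyMeasurable 2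
  have hXint : ∀ j i, Integrable (X j i) μ := fun j i => (hX2 j i).integrable one_le_two
  -- sample mean coordinates
  set Z : Fin k → Ω → ℝ := fun j ω => (1 / n : ℝ) * ∑ i, Y i ω j with hZ
  have hZmeas : ∀ j, Measurable (Z j) := fun j =>
    measurable_const.mul (Finset.measurable_sum _ fun i _ => hXm j i)
  have hZ01 : ∀ j ω, Z j ω ∈ Set.Icc (0 : ℝ) 1 := by
    intro j ω
    constructor
    · exact mul_nonneg (by positivity) (Finset.sum_nonneg fun i _ => hY0 i ω j)
    · have h1 : ∑ i, Y i ω j ≤ (n : ℝ) := by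
        calc ∑ i, Y i ω j ≤ ∑ _i : Fin n, (1 : ℝ) :=
              Finset.sum_le_sum fun i _ => hY1 i ω j
          _ = n := by simp
      calc Z j ω ≤ (1 / n : ℝ) * n := by
            exact mul_le_mul_of_nonneg_left h1 (by positivity)
        _ = 1 := by field_simp
  have hZsum : ∀ ω, ∑ j, Z j ω = 1 := by
    intro ω
    simp only [hZ]
    rw [← Finset.mul_sum, Finset.sum_comm]
    have : ∑ i : Fin n, ∑ j, Y i ω j = (n : ℝ) := by
      simp [hYs]
    rw [this]
    field_simp
  -- properties of θ
  have i0 : Fin n := ⟨0, hn⟩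
  have hθ0 : ∀ j, 0 ≤ θ j := by
    intro j
    rw [← hθmean i0 j]
    exact integral_nonneg fun ω => hY0 i0 ω j
  have hθsum : ∑ j, θ j = 1 := by
    have : ∑ j, ∫ ω, Y i0 ω j ∂μ = ∫ ω, ∑ j, Y i0 ω j ∂μ :=
      (integral_finset_sum _ fun j _ => hXint j i0).symm
    simp only [hθmean i0] at this
    rw [this]
    simp [hYs]
  -- mean of Z
  have hZmean : ∀ j, ∫ ω, Z j ω ∂μ = θ j := by
    intro j
    simp only [hZ]
    rw [integral_const_mul, integral_finset_sum _ fun i _ => hXint j i]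
    simp only [hX, hθmean]
    rw [Finset.sum_const, Finset.card_univ, Fintype.card_fin, nsmul_eq_mul]
    field_simp
  -- a.e. vanishing where θ is zero
  have hzero : ∀ j, θ j = 0 → ∀ᵐ ω ∂μ, Z j ω = 0 := by
    intro j hj
    have hall : ∀ᵐ ω ∂μ, ∀ i, Y i ω j = 0 := by
      rw [ae_all_iff]
      intro i
      have h0 : ∫ ω, Y i ω j ∂μ = 0 := by rw [hθmean i j]; exact hj
      have := (integral_eq_zero_iff_of_nonneg (fun ω => hY0 i ω j) (hXint j i)).1 h0
      filter_upwards [this] with ω h using h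
    filter_upwards [hall] with ω h
    simp only [hZ]
    rw [Finset.sum_eq_zero fun i _ => h i, mul_zero]
  -- variance bound
  have hvar : ∀ j, θ j ≠ 0 → ∫ ω, (Z j ω - θ j) ^ 2 ∂μ ≤ (θ j - θ j ^ 2) * (1 / n) := by
    intro j hj
    have hZ2 : MemLp (Z j) 2 μ :=
      memLp_of_bounded (ae_of_all _ fun ω => hZ01 j ω) (hZmeas j).aestronglyMeasurable 2
    -- express the integral as a variance
    have heq : ∫ ω, (Z j ω - θ j) ^ 2 ∂μ = variance (Z j) μ := by
      rw [variance_eq_integral hZ2.aemeasurable, hZmean j]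
    -- independence of the coordinates
    have hind : iIndepFun (X j) μ :=
      hYindep.comp (fun _ v => v j) (fun _ => measurable_pi_apply j)
    have hsum_eq : (fun ω => ∑ i, X j i ω) = ∑ i, X j i := by
      funext ω; simp
    have hvarsum : variance (fun ω => ∑ i, X j i ω) μ = ∑ i, variance (X j i) μ := by
      rw [hsum_eq]
      exact IndepFun.variance_sum (fun i _ => hX2 j i)
        (fun i _ l _ hil => hind.indepFun hil)
    have hvarZ : variance (Z j) μ = (1 / n : ℝ) ^ 2 * ∑ i, variance (X j i) μ := by
      have : Z j = fun ω => (1 / n : ℝ) * (fun ω' => ∑ i, X j i ω') ω := rfl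
      rw [this, variance_const_mul, hvarsum]
    -- per-coordinate variance bound
    have hvar1 : ∀ i, variance (X j i) μ ≤ θ j - θ j ^ 2 := by
      intro i
      rw [variance_eq_sub (hX2 j i)]
      have hm : (∫ ω, X j i ω ∂μ) = θ j := hθmean i j
      have hsq : ∫ ω, (X j i ω) ^ 2 ∂μ ≤ θ j := by
        rw [← hθmean i j]
        refine integral_mono (hX2 j i).integrable_sq (hXint j i) fun ω => ?_
        have h1 := hY0 i ω j
        have h2 := hY1 i ω j
        nlinarith
      have : (μ[(X j i) ^ 2] : ℝ) = ∫ ω, (X j i ω) ^ 2 ∂μ := rfl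
      rw [this]
      have : (μ[X j i] : ℝ) = θ j := hθmean i j
      rw [this]
      linarith
    have hsum_le : ∑ i, variance (X j i) μ ≤ (n : ℝ) * (θ j - θ j ^ 2) := by
      calc ∑ i, variance (X j i) μ ≤ ∑ _i : Fin n, (θ j - θ j ^ 2) :=
            Finset.sum_le_sum fun i _ => hvar1 i
        _ = (n : ℝ) * (θ j - θ j ^ 2) := by
            rw [Finset.sum_const, Finset.card_univ, Fintype.card_fin, nsmul_eq_mul]
    rw [heq, hvarZ]
    calc (1 / n : ℝ) ^ 2 * ∑ i, variance (X j i) μ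
        ≤ (1 / n : ℝ) ^ 2 * ((n : ℝ) * (θ j - θ j ^ 2)) :=
          mul_le_mul_of_nonneg_left hsum_le (by positivity)
      _ = (θ j - θ j ^ 2) * (1 / n) := by field_simp
  -- apply the auxiliary lemma
  have hcard : ((Finset.univ.filter fun j => θ j ≠ 0).card : ℝ) ≤ s := by
    exact_mod_cast hθsparse
  have := hellinger_risk_aux μ Z θ s (1 / n) (by positivity) hZmeas hZ01 hZsum hθ0 hθsum
    hzero hvar hcard
  constructor
  · have h := this.1
    rwa [mul_one_div] at h
  · have h := this.2
    rwa [mul_one_div] at h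
end
end

section
/- Let Y_1,…,Y_n be i.i.d. random vectors taking values in the probability simplex Δ^{k-1} whose mean θ* = E[Y_1] has at most s nonzero coordinates (s ≥ 1), and let Ȳ_n := (1/n) Σ_{i=1}^n Y_i. Then for every δ ∈ (0,1), with probability at least 1 − δ, d_H²(Ȳ_n, θ*) ≤ (9.75 s log(2s/δ) + log(2/δ)) / n. -/
open MeasureTheory ProbabilityTheory

noncomputable section

section Aux

lemma keyIneq (a p : ℝ) (hp : 0 < p) (ha : 0 ≤ a) :
    (Real.sqrt a - Real.sqrt p)^2 ≤ a * Real.log (a/p) - a + p := by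
  rcases eq_or_lt_of_le ha with h|h
  · simp [← h, Real.sq_sqrt hp.le]
  · set x := Real.sqrt (a/p) with hxdef
    have hx : 0 < a / p := div_pos h hp
    have hx0 : 0 < x := Real.sqrt_pos.2 hx
    have hlog : Real.log (a/p) = 2 * Real.log x := by
      rw [hxdef, Real.log_sqrt hx.le]; ring
    have hxa : Real.sqrt a = x * Real.sqrt p := by
      have hsp0 : Real.sqrt p ≠ 0 := (Real.sqrt_pos.2 hp).ne'
      rw [hxdef, Real.sqrt_div h.le]
      field_simp
    have hx2 : x^2 = a / p := Real.sq_sqrt hx.le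
    have ha' : a = p * x^2 := by rw [hx2]; field_simp
    have hinv : Real.log x⁻¹ ≤ x⁻¹ - 1 := Real.log_le_sub_one_of_pos (inv_pos.2 hx0)
    rw [Real.log_inv] at hinv
    have key : 0 ≤ x * Real.log x - x + 1 := by
      have h2 : -(x * Real.log x) ≤ 1 - x := by
        have := mul_le_mul_of_nonneg_left hinv hx0.le
        rw [mul_sub, mul_inv_cancel₀ hx0.ne'] at this
        linarith
      linarith
    have hsp : Real.sqrt p ^ 2 = p := Real.sq_sqrt hp.le
    rw [hxa, hlog, ha']
    nlinarith [mul_nonneg (mul_nonneg hp.le hx0.le) key, Real.sqrt_nonneg p, hsp]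

lemma hellinger_split {m p u : ℝ} (hm0 : 0 ≤ m) (hp : 0 < p) (hu : 0 < u)
    (h : u < (Real.sqrt m - Real.sqrt p)^2) :
    (Real.sqrt p + Real.sqrt u)^2 ≤ m ∨ (u < p ∧ m ≤ (Real.sqrt p - Real.sqrt u)^2) := by
  have hsm0 : 0 ≤ Real.sqrt m := Real.sqrt_nonneg m
  have hsp0 : 0 ≤ Real.sqrt p := Real.sqrt_nonneg p
  have hsu0 : 0 ≤ Real.sqrt u := Real.sqrt_nonneg u
  have hsqm : Real.sqrt m ^ 2 = m := Real.sq_sqrt hm0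
  rcases le_or_gt (Real.sqrt p) (Real.sqrt m) with hc | hc
  · left
    have hd0 : 0 < Real.sqrt m - Real.sqrt p := by
      rcases (sub_nonneg.2 hc).eq_or_lt with h0 | h0
      · exfalso; rw [← h0] at h; simpa using (hu.trans h)
      · exact h0
    have h1 : Real.sqrt u < Real.sqrt m - Real.sqrt p := (Real.sqrt_lt' hd0).2 h
    calc (Real.sqrt p + Real.sqrt u)^2 ≤ Real.sqrt m ^ 2 := by
          apply pow_le_pow_left₀ (by positivity); linarith
      _ = m := hsqm
  · right
    have h' : u < (Real.sqrt p - Real.sqrt m)^2 := by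
      rw [show (Real.sqrt p - Real.sqrt m)^2 = (Real.sqrt m - Real.sqrt p)^2 by ring]; exact h
    have h1 : Real.sqrt u < Real.sqrt p - Real.sqrt m := (Real.sqrt_lt' (by linarith)).2 h'
    have hsup : Real.sqrt u < Real.sqrt p := by linarith
    have hup : u < p := by
      have := pow_lt_pow_left₀ hsup hsu0 (n := 2) two_ne_zero
      rwa [Real.sq_sqrt hu.le, Real.sq_sqrt hp.le] at this
    refine ⟨hup, ?_⟩
    calc m = Real.sqrt m ^ 2 := hsqm.symm
      _ ≤ (Real.sqrt p - Real.sqrt u)^2 := by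
          apply pow_le_pow_left₀ hsm0; linarith

variable {Ω : Type} [MeasurableSpace Ω] (μ : Measure Ω) [IsProbabilityMeasure μ]

lemma exp_mul_le (t : ℝ) {x : ℝ} (hx : x ∈ Set.Icc (0:ℝ) 1) :
    Real.exp (t * x) ≤ 1 + x * (Real.exp t - 1) := by
  obtain ⟨h0, h1⟩ := hx
  have := convexOn_exp.2 (Set.mem_univ (0:ℝ)) (Set.mem_univ t)
    (by linarith : (0:ℝ) ≤ 1 - x) h0 (by ring)
  simp only [smul_eq_mul, mul_zero, zero_add, Real.exp_zero, mul_one] at this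
  calc Real.exp (t * x) = Real.exp ((1-x) * 0 + x * t) := by ring_nf
    _ ≤ (1-x) * 1 + x * Real.exp t := by simpa using this
    _ = 1 + x * (Real.exp t - 1) := by ring

lemma int_exp (t : ℝ) {X : Ω → ℝ} (hm : Measurable X) (hv : ∀ ω, X ω ∈ Set.Icc (0:ℝ) 1) :
    Integrable (fun ω => Real.exp (t * X ω)) μ := by
  refine Integrable.mono' (integrable_const (Real.exp |t|))
    ((hm.const_mul t).exp.aestronglyMeasurable) (ae_of_all _ fun ω => ?_)
  rw [Real.norm_eq_abs, abs_of_pos (Real.exp_pos _), Real.exp_le_exp]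
  obtain ⟨h0, h1⟩ := hv ω
  calc t * X ω ≤ |t| * X ω := mul_le_mul_of_nonneg_right (le_abs_self t) h0
    _ ≤ |t| * 1 := mul_le_mul_of_nonneg_left h1 (abs_nonneg t)
    _ = |t| := mul_one _

lemma mgf_le_of_mean (t : ℝ) {X : Ω → ℝ} (hm : Measurable X)
    (hv : ∀ ω, X ω ∈ Set.Icc (0:ℝ) 1) {p : ℝ} (hmean : ∫ ω, X ω ∂μ = p) :
    mgf X μ t ≤ Real.exp (p * (Real.exp t - 1)) := by
  have hXint : Integrable X μ := by
    refine Integrable.mono' (integrable_const 1) hm.aestronglyMeasurable (ae_of_all _ fun ω => ?_)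
    rw [Real.norm_eq_abs, abs_of_nonneg (hv ω).1]; exact (hv ω).2
  have h1 : mgf X μ t ≤ 1 + p * (Real.exp t - 1) := by
    rw [mgf, ← hmean]
    calc ∫ ω, Real.exp (t * X ω) ∂μ ≤ ∫ ω, (1 + X ω * (Real.exp t - 1)) ∂μ := by
          refine integral_mono (int_exp μ t hm hv)
            ((integrable_const 1).add (hXint.mul_const _)) (fun ω => exp_mul_le t (hv ω))
      _ = 1 + (∫ ω, X ω ∂μ) * (Real.exp t - 1) := by
          rw [integral_add (integrable_const 1) (hXint.mul_const _), integral_const,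
            integral_mul_const]
          simp
  exact h1.trans (by linarith [Real.add_one_le_exp (p * (Real.exp t - 1))])

lemma mgf_sum_le {n : ℕ} {X : Fin n → Ω → ℝ} (hmeas : ∀ i, Measurable (X i))
    (hindep : iIndepFun X μ)
    (hval : ∀ i ω, X i ω ∈ Set.Icc (0:ℝ) 1)
    {p : ℝ} (hmean : ∀ i, ∫ ω, X i ω ∂μ = p) (t : ℝ) :
    mgf (∑ i, X i) μ t ≤ Real.exp ((n:ℝ) * (p * (Real.exp t - 1))) := by
  rw [hindep.mgf_sum hmeas]
  calc ∏ i : Fin n, mgf (X i) μ t ≤ ∏ _i : Fin n, Real.exp (p * (Real.exp t - 1)) := by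
        refine Finset.prod_le_prod (fun i _ => mgf_nonneg) (fun i _ =>
          mgf_le_of_mean μ t (hmeas i) (hval i) (hmean i))
    _ = Real.exp ((n:ℝ) * (p * (Real.exp t - 1))) := by
        rw [Finset.prod_const, ← Real.exp_nat_mul]; simp

lemma upper_tail {n : ℕ} {X : Fin n → Ω → ℝ} (hmeas : ∀ i, Measurable (X i))
    (hindep : iIndepFun X μ)
    (hval : ∀ i ω, X i ω ∈ Set.Icc (0:ℝ) 1)
    {p : ℝ} (hmean : ∀ i, ∫ ω, X i ω ∂μ = p) {t : ℝ} (ht : 0 ≤ t) (a : ℝ) :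
    μ {ω | (n:ℝ) * a ≤ ∑ i, X i ω} ≤
      ENNReal.ofReal (Real.exp (-t * ((n:ℝ)*a) + (n:ℝ) * (p * (Real.exp t - 1)))) := by
  have hint : Integrable (fun ω => Real.exp (t * (∑ i, X i) ω)) μ :=
    hindep.integrable_exp_mul_sum hmeas (fun i _ => int_exp μ t (hmeas i) (hval i))
  have h := measure_ge_le_exp_mul_mgf ((n:ℝ)*a) ht hint (X := ∑ i, X i) (μ := μ)
  have hset : {ω | (n:ℝ) * a ≤ ∑ i, X i ω} = {ω | (n:ℝ)*a ≤ (∑ i, X i) ω} := by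
    ext ω; simp [Finset.sum_apply]
  rw [hset, ← ENNReal.ofReal_toReal (measure_ne_top μ _)]
  refine ENNReal.ofReal_le_ofReal (h.trans ?_)
  rw [Real.exp_add]
  exact mul_le_mul_of_nonneg_left (mgf_sum_le μ hmeas hindep hval hmean t) (Real.exp_pos _).le

lemma lower_tail {n : ℕ} {X : Fin n → Ω → ℝ} (hmeas : ∀ i, Measurable (X i))
    (hindep : iIndepFun X μ)
    (hval : ∀ i ω, X i ω ∈ Set.Icc (0:ℝ) 1)
    {p : ℝ} (hmean : ∀ i, ∫ ω, X i ω ∂μ = p) {t : ℝ} (ht : t ≤ 0) (a : ℝ) :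
    μ {ω | ∑ i, X i ω ≤ (n:ℝ) * a} ≤
      ENNReal.ofReal (Real.exp (-t * ((n:ℝ)*a) + (n:ℝ) * (p * (Real.exp t - 1)))) := by
  have hint : Integrable (fun ω => Real.exp (t * (∑ i, X i) ω)) μ :=
    hindep.integrable_exp_mul_sum hmeas (fun i _ => int_exp μ t (hmeas i) (hval i))
  have h := measure_le_le_exp_mul_mgf ((n:ℝ)*a) ht hint (X := ∑ i, X i) (μ := μ)
  have hset : {ω | ∑ i, X i ω ≤ (n:ℝ)*a} = {ω | (∑ i, X i) ω ≤ (n:ℝ)*a} := by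
    ext ω; simp [Finset.sum_apply]
  rw [hset, ← ENNReal.ofReal_toReal (measure_ne_top μ _)]
  refine ENNReal.ofReal_le_ofReal (h.trans ?_)
  rw [Real.exp_add]
  exact mul_le_mul_of_nonneg_left (mgf_sum_le μ hmeas hindep hval hmean t) (Real.exp_pos _).le

lemma coord_bound {n : ℕ} (hn : 0 < n) {X : Fin n → Ω → ℝ} (hmeas : ∀ i, Measurable (X i))
    (hindep : iIndepFun X μ)
    (hval : ∀ i ω, X i ω ∈ Set.Icc (0:ℝ) 1)
    {p : ℝ} (hp : 0 < p) (hmean : ∀ i, ∫ ω, X i ω ∂μ = p) {u : ℝ} (hu : 0 < u) :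
    μ {ω | u < (Real.sqrt ((1/(n:ℝ)) * ∑ i, X i ω) - Real.sqrt p)^2} ≤
      ENNReal.ofReal (2 * Real.exp (-((n:ℝ)*u))) := by
  have hn0 : (0:ℝ) < (n:ℝ) := Nat.cast_pos.2 hn
  set e := Real.exp (-((n:ℝ)*u)) with he
  have he0 : 0 ≤ e := (Real.exp_pos _).le
  have hexp : ∀ a : ℝ, 0 < a →
      Real.exp (-(Real.log (a/p)) * ((n:ℝ)*a) + (n:ℝ) * (p * (Real.exp (Real.log (a/p)) - 1)))
        = Real.exp (-((n:ℝ) * (a * Real.log (a/p) - a + p))) := by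
    intro a ha
    rw [Real.exp_log (div_pos ha hp)]
    congr 1
    field_simp
    ring
  set aP := (Real.sqrt p + Real.sqrt u)^2 with haPdef
  have hsaP : Real.sqrt aP = Real.sqrt p + Real.sqrt u :=
    Real.sqrt_sq (by positivity)
  have haPpos : 0 < aP := by positivity
  have haPp : p ≤ aP := by nlinarith [Real.sq_sqrt hp.le, Real.sqrt_nonneg p, Real.sqrt_nonneg u, Real.sq_sqrt hu.le]
  have htP : 0 ≤ Real.log (aP/p) := Real.log_nonneg ((one_le_div hp).2 haPp)
  have hkeyP : u ≤ aP * Real.log (aP/p) - aP + p := by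
    have := keyIneq aP p hp haPpos.le
    rw [hsaP] at this
    nlinarith [Real.sq_sqrt hu.le]
  have hEP : μ {ω | (n:ℝ) * aP ≤ ∑ i, X i ω} ≤ ENNReal.ofReal e := by
    refine (upper_tail μ hmeas hindep hval hmean htP aP).trans ?_
    rw [hexp aP haPpos]
    refine ENNReal.ofReal_le_ofReal (Real.exp_le_exp.2 ?_)
    rw [neg_le_neg_iff]
    exact mul_le_mul_of_nonneg_left hkeyP hn0.le
  by_cases hup : u < p
  · set aM := (Real.sqrt p - Real.sqrt u)^2 with haMdef
    have hsu : Real.sqrt u < Real.sqrt p := Real.sqrt_lt_sqrt hu.le hup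
    have hsaM : Real.sqrt aM = Real.sqrt p - Real.sqrt u :=
      Real.sqrt_sq (by linarith)
    have haMpos : 0 < aM := by nlinarith
    have haMp : aM ≤ p := by nlinarith [Real.sq_sqrt hp.le, Real.sqrt_nonneg u, Real.sq_sqrt hu.le]
    have htM : Real.log (aM/p) ≤ 0 :=
      Real.log_nonpos (by positivity) ((div_le_one hp).2 haMp)
    have hkeyM : u ≤ aM * Real.log (aM/p) - aM + p := by
      have := keyIneq aM p hp haMpos.le
      rw [hsaM] at this
      nlinarith [Real.sq_sqrt hu.le]
    have hEM : μ {ω | ∑ i, X i ω ≤ (n:ℝ) * aM} ≤ ENNReal.ofReal e := by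
      refine (lower_tail μ hmeas hindep hval hmean htM aM).trans ?_
      rw [hexp aM haMpos]
      refine ENNReal.ofReal_le_ofReal (Real.exp_le_exp.2 ?_)
      rw [neg_le_neg_iff]
      exact mul_le_mul_of_nonneg_left hkeyM hn0.le
    have hsub : {ω | u < (Real.sqrt ((1/(n:ℝ)) * ∑ i, X i ω) - Real.sqrt p)^2} ⊆
        {ω | (n:ℝ) * aP ≤ ∑ i, X i ω} ∪ {ω | ∑ i, X i ω ≤ (n:ℝ) * aM} := by
      intro ω hω
      simp only [Set.mem_setOf_eq, Set.mem_union] at hω ⊢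
      set m := (1/(n:ℝ)) * ∑ i, X i ω with hmdef
      have hm0 : 0 ≤ m :=
        mul_nonneg (by positivity) (Finset.sum_nonneg fun i _ => (hval i ω).1)
      have hSm : ∑ i, X i ω = (n:ℝ) * m := by rw [hmdef]; field_simp
      rcases hellinger_split hm0 hp hu hω with hcase | ⟨_, hcase⟩
      · left; rw [hSm, haPdef]; exact mul_le_mul_of_nonneg_left hcase hn0.le
      · right; rw [hSm, haMdef]; exact mul_le_mul_of_nonneg_left hcase hn0.le
    calc μ _ ≤ μ ({ω | (n:ℝ) * aP ≤ ∑ i, X i ω} ∪ {ω | ∑ i, X i ω ≤ (n:ℝ) * aM}) :=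
          measure_mono hsub
      _ ≤ μ {ω | (n:ℝ) * aP ≤ ∑ i, X i ω} + μ {ω | ∑ i, X i ω ≤ (n:ℝ) * aM} :=
          measure_union_le _ _
      _ ≤ ENNReal.ofReal e + ENNReal.ofReal e := add_le_add hEP hEM
      _ = ENNReal.ofReal (2 * e) := by rw [← ENNReal.ofReal_add he0 he0]; ring_nf
  · push_neg at hup
    have hsub : {ω | u < (Real.sqrt ((1/(n:ℝ)) * ∑ i, X i ω) - Real.sqrt p)^2} ⊆
        {ω | (n:ℝ) * aP ≤ ∑ i, X i ω} := by
      intro ω hω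
      simp only [Set.mem_setOf_eq] at hω ⊢
      set m := (1/(n:ℝ)) * ∑ i, X i ω with hmdef
      have hm0 : 0 ≤ m :=
        mul_nonneg (by positivity) (Finset.sum_nonneg fun i _ => (hval i ω).1)
      have hSm : ∑ i, X i ω = (n:ℝ) * m := by rw [hmdef]; field_simp
      rcases hellinger_split hm0 hp hu hω with hcase | ⟨hcase, _⟩
      · rw [hSm, haPdef]; exact mul_le_mul_of_nonneg_left hcase hn0.le
      · exact absurd hcase (not_lt.2 hup)
    calc μ _ ≤ μ {ω | (n:ℝ) * aP ≤ ∑ i, X i ω} := measure_mono hsub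
      _ ≤ ENNReal.ofReal e := hEP
      _ ≤ ENNReal.ofReal (2 * e) := ENNReal.ofReal_le_ofReal (by linarith)

end Aux

/-- For i.i.d. simplex-valued observations with an `s`-sparse mean, with probability
at least `1 - δ`, `d_H²(Ȳ_n, θ*) ≤ (9.75·s·log(2s/δ) + log(2/δ))/n`. -/
theorem sample_mean_Hellinger_sq_confidence_iid
    {Ω : Type} [MeasurableSpace Ω] (μ : Measure Ω) [IsProbabilityMeasure μ]
    (k s n : ℕ) (hk : 1 ≤ k) (hs1 : 1 ≤ s) (hn : 1 ≤ n)
    (Y : Fin n → Ω → Fin k → ℝ)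
    (hYmeas : ∀ i, Measurable (Y i))
    (hYindep : iIndepFun Y μ)
    (hYid : ∀ i j, IdentDistrib (Y i) (Y j) μ μ)
    (hYval : ∀ i ω, Y i ω ∈ simplex k)
    (θ : Fin k → ℝ) (hθmean : ∀ i j, ∫ ω, Y i ω j ∂μ = θ j)
    (hθsparse : sparse s θ)
    (δ : ℝ) (hδ0 : 0 < δ) (hδ1 : δ < 1) :
    ENNReal.ofReal (1 - δ) ≤
      μ {ω | dH (fun j => (1 / n : ℝ) * ∑ i, Y i ω j) θ ^ 2 ≤
        (9.75 * s * Real.log (2 * s / δ) + Real.log (2 / δ)) / n} := by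
  classical
  have hn0 : (0:ℝ) < (n:ℝ) := by exact_mod_cast hn
  have hs0 : (0:ℝ) < (s:ℝ) := by exact_mod_cast hs1
  have hs1' : (1:ℝ) ≤ (s:ℝ) := by exact_mod_cast hs1
  -- basic facts
  have hcoordmeas : ∀ i (j : Fin k), Measurable (fun ω => Y i ω j) :=
    fun i j => (measurable_pi_apply j).comp (hYmeas i)
  have hcoordval : ∀ (j : Fin k) i ω, (fun ω => Y i ω j) ω ∈ Set.Icc (0:ℝ) 1 := by
    intro j i ω
    obtain ⟨hpos, hsum⟩ := hYval i ω
    refine ⟨hpos j, ?_⟩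
    calc Y i ω j ≤ ∑ j', Y i ω j' :=
          Finset.single_le_sum (fun j' _ => hpos j') (Finset.mem_univ j)
      _ = 1 := hsum
  have hθnonneg : ∀ j, 0 ≤ θ j := by
    intro j
    rw [← hθmean ⟨0, hn⟩ j]
    exact integral_nonneg (fun ω => (hcoordval j _ ω).1)
  -- the support
  set S : Finset (Fin k) := Finset.univ.filter (fun j => θ j ≠ 0) with hSdef
  have hScard : (S.card : ℝ) ≤ (s:ℝ) := by exact_mod_cast hθsparse
  -- the log quantity and threshold
  set L : ℝ := Real.log (2 * s / δ) with hLdef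
  have hL0 : 0 < L := by
    refine Real.log_pos ?_
    rw [lt_div_iff₀ hδ0]
    nlinarith
  have hL2 : 0 < Real.log (2 / δ) := by
    refine Real.log_pos ?_
    rw [lt_div_iff₀ hδ0]; nlinarith
  set u : ℝ := L / n with hudef
  have hu : 0 < u := div_pos hL0 hn0
  have hnu : (n:ℝ) * u = L := by rw [hudef]; field_simp
  -- per coordinate bound
  have hcoordbd : ∀ j ∈ S,
      μ {ω | u < (Real.sqrt ((1/(n:ℝ)) * ∑ i, Y i ω j) - Real.sqrt (θ j))^2} ≤
        ENNReal.ofReal (δ / s) := by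
    intro j hj
    have hpj : 0 < θ j := by
      rcases (hθnonneg j).eq_or_lt with h0 | h0
      · exact absurd h0.symm (Finset.mem_filter.1 hj).2
      · exact h0
    have hindepj : iIndepFun (fun i ω => Y i ω j) μ :=
      hYindep.comp (fun _ v => v j) (fun _ => measurable_pi_apply j)
    have hb := coord_bound μ hn (fun i => hcoordmeas i j) hindepj
      (fun i ω => hcoordval j i ω) hpj (fun i => hθmean i j) hu
    refine hb.trans (le_of_eq ?_)
    congr 1
    rw [hnu, hLdef, Real.exp_neg,
      Real.exp_log (by positivity : (0:ℝ) < 2 * (s:ℝ) / δ)]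
    field_simp
  -- the bad event
  set B : Fin k → Set Ω := fun j =>
    {ω | u < (Real.sqrt ((1/(n:ℝ)) * ∑ i, Y i ω j) - Real.sqrt (θ j))^2} with hBdef
  have hBmeas : ∀ j, MeasurableSet (B j) := by
    intro j
    apply measurableSet_lt measurable_const
    apply Measurable.pow_const
    apply Measurable.sub _ measurable_const
    apply Measurable.sqrt
    exact (Finset.measurable_sum Finset.univ (fun i _ => hcoordmeas i j)).const_mul _
  set bad : Set Ω := ⋃ j ∈ S, B j with hbaddef
  have hbadmeas : MeasurableSet bad := MeasurableSet.biUnion S.countable_toSet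
    (fun j _ => hBmeas j)
  have hbadle : μ bad ≤ ENNReal.ofReal δ := by
    calc μ bad ≤ ∑ j ∈ S, μ (B j) := measure_biUnion_finset_le S B
      _ ≤ ∑ _j ∈ S, ENNReal.ofReal (δ / s) := Finset.sum_le_sum (fun j hj => hcoordbd j hj)
      _ = S.card * ENNReal.ofReal (δ / s) := by rw [Finset.sum_const, nsmul_eq_mul]
      _ ≤ (s:ENNReal) * ENNReal.ofReal (δ / s) := by
          apply mul_le_mul_left
          exact_mod_cast hθsparse
      _ = ENNReal.ofReal δ := by
          rw [← ENNReal.ofReal_natCast s, ← ENNReal.ofReal_mul hs0.le]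
          congr 1
          field_simp
  -- the a.e. event for off-support coordinates
  have hae : ∀ᵐ ω ∂μ, ∀ i (j : Fin k), θ j = 0 → Y i ω j = 0 := by
    rw [ae_all_iff]
    intro i
    rw [ae_all_iff]
    intro j
    by_cases hj : θ j = 0
    · have hint : Integrable (fun ω => Y i ω j) μ := by
        refine Integrable.mono' (integrable_const 1)
          (hcoordmeas i j).aestronglyMeasurable (ae_of_all _ fun ω => ?_)
        rw [Real.norm_eq_abs, abs_of_nonneg (hcoordval j i ω).1]
        exact (hcoordval j i ω).2
      have h0 : ∫ ω, Y i ω j ∂μ = 0 := by rw [hθmean i j, hj]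
      have := (integral_eq_zero_iff_of_nonneg (fun ω => (hcoordval j i ω).1) hint).1 h0
      filter_upwards [this] with ω hω
      intro _
      exact hω
    · exact ae_of_all _ (fun ω h => absurd h hj)
  set A : Set Ω := {ω | ∀ i (j : Fin k), θ j = 0 → Y i ω j = 0} with hAdef
  have hAc : μ Aᶜ = 0 := by
    rw [hAdef]
    exact hae
  -- the good event is contained in the target
  have hsub : badᶜ ∩ A ⊆ {ω | dH (fun j => (1 / n : ℝ) * ∑ i, Y i ω j) θ ^ 2 ≤
        (9.75 * s * Real.log (2 * s / δ) + Real.log (2 / δ)) / n} := by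
    rintro ω ⟨hωb, hωA⟩
    simp only [Set.mem_setOf_eq]
    have hωB : ∀ j ∈ S, (Real.sqrt ((1/(n:ℝ)) * ∑ i, Y i ω j) - Real.sqrt (θ j))^2 ≤ u := by
      intro j hj
      have : ω ∉ B j := fun h => hωb (Set.mem_biUnion hj h)
      simpa [hBdef, not_lt] using this
    have hd2 : dH (fun j => (1 / n : ℝ) * ∑ i, Y i ω j) θ ^ 2 =
        ∑ j, (Real.sqrt ((1 / (n:ℝ)) * ∑ i, Y i ω j) - Real.sqrt (θ j))^2 := by
      rw [dH, Real.sq_sqrt]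
      exact Finset.sum_nonneg (fun j _ => sq_nonneg _)
    rw [hd2]
    have hsplit : ∑ j, (Real.sqrt ((1 / (n:ℝ)) * ∑ i, Y i ω j) - Real.sqrt (θ j))^2 =
        ∑ j ∈ S, (Real.sqrt ((1 / (n:ℝ)) * ∑ i, Y i ω j) - Real.sqrt (θ j))^2 +
        ∑ j ∈ Finset.univ.filter (fun j => ¬ θ j ≠ 0),
          (Real.sqrt ((1 / (n:ℝ)) * ∑ i, Y i ω j) - Real.sqrt (θ j))^2 := by
      rw [hSdef]
      exact (Finset.sum_filter_add_sum_filter_not _ _ _).symm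
    rw [hsplit]
    have hzero : ∑ j ∈ Finset.univ.filter (fun j => ¬ θ j ≠ 0),
        (Real.sqrt ((1 / (n:ℝ)) * ∑ i, Y i ω j) - Real.sqrt (θ j))^2 = 0 := by
      refine Finset.sum_eq_zero (fun j hj => ?_)
      have hθj : θ j = 0 := by simpa using (Finset.mem_filter.1 hj).2
      have hYj : ∀ i : Fin n, Y i ω j = 0 := fun i => hωA i j hθj
      simp [hθj, Finset.sum_congr rfl (fun i _ => hYj i)]
    rw [hzero, add_zero]
    calc ∑ j ∈ S, (Real.sqrt ((1 / (n:ℝ)) * ∑ i, Y i ω j) - Real.sqrt (θ j))^2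
        ≤ ∑ _j ∈ S, u := Finset.sum_le_sum hωB
      _ = S.card * u := by rw [Finset.sum_const, nsmul_eq_mul]
      _ ≤ (s:ℝ) * u := mul_le_mul_of_nonneg_right hScard hu.le
      _ = (s:ℝ) * L / n := by rw [hudef]; ring
      _ ≤ (9.75 * s * L + Real.log (2 / δ)) / n := by
          refine (div_le_div_iff_of_pos_right hn0).2 ?_
          nlinarith [mul_pos hs0 hL0, hL2]
  calc ENNReal.ofReal (1 - δ)
      ≤ 1 - ENNReal.ofReal δ := by
        rw [← ENNReal.ofReal_one, ← ENNReal.ofReal_sub _ hδ0.le]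
    _ ≤ 1 - μ bad := tsub_le_tsub_left hbadle 1
    _ = μ badᶜ := (prob_compl_eq_one_sub hbadmeas).symm
    _ ≤ μ (badᶜ ∩ A) + μ Aᶜ := by
        refine (measure_mono ?_).trans (measure_union_le _ _)
        intro ω hω
        by_cases hA : ω ∈ A
        · exact Or.inl ⟨hω, hA⟩
        · exact Or.inr hA
    _ = μ (badᶜ ∩ A) := by rw [hAc, add_zero]
    _ ≤ μ {ω | dH (fun j => (1 / n : ℝ) * ∑ i, Y i ω j) θ ^ 2 ≤
        (9.75 * s * Real.log (2 * s / δ) + Real.log (2 / δ)) / n} := measure_mono hsub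
end
end
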